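/- arXiv:1609.05185 — 10 statements merged into one kernel-verified Lean document; each statement's English description precedes it below -/
import Mathlib

section
/- Let e_0, e_t, e_1, e_∞ ∈ ℂ∖{0} with e_0e_te_1e_∞ = 1, and set a_l = e_l + e_l^{-1} for l ∈ {0,t,1,∞}. Then the point X_0 = e_te_1 + (e_te_1)^{-1}, X_t = e_1e_0 + (e_1e_0)^{-1}, X_1 = e_0e_t + (e_0e_t)^{-1} is a singular point of the surface {F(X;a) = 0}: at this point F = 0 and F_{X_0} = F_{X_t} = F_{X_1} = 0. -/
set_option maxHeartbeats 2000000


noncomputable section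

/-- The Fricke polynomial `F(X0, Xt, X1; a0, at, a1, a∞)` of the PVI character variety. -/
def FVI (a0 aT a1 aI X0 XT X1 : ℂ) : ℂ :=
  X0 * XT * X1 + X0 ^ 2 + XT ^ 2 + X1 ^ 2
    - (a0 * aI + aT * a1) * X0 - (aT * aI + a1 * a0) * XT - (a1 * aI + a0 * aT) * X1
    + (a0 * aT * a1 * aI + a0 ^ 2 + aT ^ 2 + a1 ^ 2 + aI ^ 2 - 4)

/-- `F_{X_0} = Xt X1 + 2 X0 − θ_0`. -/
def FVIX0 (a0 aT a1 aI X0 XT X1 : ℂ) : ℂ := XT * X1 + 2 * X0 - (a0 * aI + aT * a1)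

/-- `F_{X_t} = X1 X0 + 2 Xt − θ_t`. -/
def FVIXT (a0 aT a1 aI X0 XT X1 : ℂ) : ℂ := X1 * X0 + 2 * XT - (aT * aI + a1 * a0)

/-- `F_{X_1} = X0 Xt + 2 X1 − θ_1`. -/
def FVIX1 (a0 aT a1 aI X0 XT X1 : ℂ) : ℂ := X0 * XT + 2 * X1 - (a1 * aI + a0 * aT)

/-- **Singular point of `S_VI(a)` coming from a reducible representation.**
If `e_0 e_t e_1 e_∞ = 1`, then `(e_te_1 + (e_te_1)⁻¹, e_1e_0 + (e_1e_0)⁻¹, e_0e_t + (e_0e_t)⁻¹)`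
is a singular point of `{F = 0}`. -/
theorem reducible_singular_point
    (e0 et e1 eI : ℂ) (he0 : e0 ≠ 0) (het : et ≠ 0) (he1 : e1 ≠ 0) (heI : eI ≠ 0)
    (hprod : e0 * et * e1 * eI = 1)
    (a0 aT a1 aI : ℂ)
    (ha0 : a0 = e0 + e0⁻¹) (haT : aT = et + et⁻¹)
    (ha1 : a1 = e1 + e1⁻¹) (haI : aI = eI + eI⁻¹)
    (X0 XT X1 : ℂ)
    (hX0 : X0 = et * e1 + (et * e1)⁻¹)
    (hXT : XT = e1 * e0 + (e1 * e0)⁻¹)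
    (hX1 : X1 = e0 * et + (e0 * et)⁻¹) :
    FVI a0 aT a1 aI X0 XT X1 = 0 ∧
    FVIX0 a0 aT a1 aI X0 XT X1 = 0 ∧
    FVIXT a0 aT a1 aI X0 XT X1 = 0 ∧
    FVIX1 a0 aT a1 aI X0 XT X1 = 0 := by
  have i0 : e0⁻¹ = et*e1*eI := inv_eq_of_mul_eq_one_right (by linear_combination hprod)
  have iT : et⁻¹ = e0*e1*eI := inv_eq_of_mul_eq_one_right (by linear_combination hprod)
  have i1 : e1⁻¹ = e0*et*eI := inv_eq_of_mul_eq_one_right (by linear_combination hprod)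
  have iI : eI⁻¹ = e0*et*e1 := inv_eq_of_mul_eq_one_right (by linear_combination hprod)
  have j0 : (et*e1)⁻¹ = e0*eI := inv_eq_of_mul_eq_one_right (by linear_combination hprod)
  have jT : (e1*e0)⁻¹ = et*eI := inv_eq_of_mul_eq_one_right (by linear_combination hprod)
  have j1 : (e0*et)⁻¹ = e1*eI := inv_eq_of_mul_eq_one_right (by linear_combination hprod)
  subst ha0 haT ha1 haI hX0 hXT hX1
  rw [i0, iT, i1, iI, j0, jT, j1]
  refine ⟨?_, ?_, ?_, ?_⟩ <;> simp only [FVI, FVIX0, FVIXT, FVIX1]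
  · linear_combination ((4:ℂ) + (-1:ℂ)*eI^2 + (-1:ℂ)*e1^2 + (-1:ℂ)*et^2 + (-5:ℂ)*e0*et*e1*eI + e0*et*e1*eI^3 + e0*et*e1^3*eI + e0*et^3*e1*eI + (-1:ℂ)*e0^2 + e0^2*et^2*e1^2*eI^2 + e0^3*et*e1*eI) * hprod
  · linear_combination ((-1:ℂ)*et*e1 + (-1:ℂ)*e0*eI) * hprod
  · linear_combination ((-1:ℂ)*et*eI + (-1:ℂ)*e0*e1) * hprod
  · linear_combination ((-1:ℂ)*e1*eI + (-1:ℂ)*e0*et) * hprod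
end
end

section
/- Let a_0, a_t, a_1 ∈ ℂ, let ε ∈ {1,−1}, and set a_∞ = 2ε. Then the point X_0 = εa_0, X_t = εa_t, X_1 = εa_1 is a singular point of the surface {F(X;a) = 0}: at this point F = 0 and F_{X_0} = F_{X_t} = F_{X_1} = 0. -/
noncomputable section

/-- **Singular point of `S_VI(a)` for `a_∞ = ±2`** (i.e. `M_∞ = ±I`): the point
`(ε a_0, ε a_t, ε a_1)` is a singular point of `{F(·; a_0, a_t, a_1, 2ε) = 0}`. -/
theorem singular_point_ainfty_pm_two
    (a0 aT a1 : ℂ) (ε : ℂ) (hε : ε = 1 ∨ ε = -1) (aI : ℂ) (haI : aI = 2 * ε)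
    (X0 XT X1 : ℂ) (hX0 : X0 = ε * a0) (hXT : XT = ε * aT) (hX1 : X1 = ε * a1) :
    FVI a0 aT a1 aI X0 XT X1 = 0 ∧
    FVIX0 a0 aT a1 aI X0 XT X1 = 0 ∧
    FVIXT a0 aT a1 aI X0 XT X1 = 0 ∧
    FVIX1 a0 aT a1 aI X0 XT X1 = 0 := by
  subst haI hX0 hXT hX1
  rcases hε with h | h <;> subst h <;>
    exact ⟨by simp only [FVI]; ring, by simp only [FVIX0]; ring,
      by simp only [FVIXT]; ring, by simp only [FVIX1]; ring⟩
end
end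

section
/- Let a = (a_0, a_t, a_1, a_∞) ∈ ℂ⁴. Define the monodromy maps g_{0t}², g_{t1}²: ℂ³ → ℂ³ by g_{0t}²(X) = (X_0 − F_{X_0}, X_t − F_{X_t} + X_1F_{X_0}, X_1) and g_{t1}²(X) = (X_0, X_t − F_{X_t}, X_1 − F_{X_1} + X_0F_{X_t}), where all partial derivatives are evaluated at (X;a). Then F(g_{0t}²(X); a) = F(X; a) and F(g_{t1}²(X); a) = F(X; a) for all X ∈ ℂ³. -/
noncomputable section

/-- **The nonlinear monodromy maps `g_{0t}²` and `g_{t1}²` of Painlevé VI preserve the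
Fricke polynomial:** `F(g_{0t}²(X); a) = F(X; a)` and `F(g_{t1}²(X); a) = F(X; a)`. -/
theorem monodromy_preserves_fricke
    (a0 aT a1 aI : ℂ) (X0 XT X1 : ℂ) :
    FVI a0 aT a1 aI
        (X0 - FVIX0 a0 aT a1 aI X0 XT X1)
        (XT - FVIXT a0 aT a1 aI X0 XT X1 + X1 * FVIX0 a0 aT a1 aI X0 XT X1)
        X1
      = FVI a0 aT a1 aI X0 XT X1 ∧
    FVI a0 aT a1 aI
        X0
        (XT - FVIXT a0 aT a1 aI X0 XT X1)
        (X1 - FVIX1 a0 aT a1 aI X0 XT X1 + X0 * FVIXT a0 aT a1 aI X0 XT X1)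
      = FVI a0 aT a1 aI X0 XT X1 := by
  constructor <;> (simp only [FVI, FVIX0, FVIXT, FVIX1]; ring)
end
end

section
/- Let a = (a_0, a_t, a_1, a_∞) ∈ ℂ⁴ and let X ∈ ℂ³ satisfy F(X; a) = 0. Then X is a common fixed point of the two monodromy maps g_{0t}²(X) = (X_0 − F_{X_0}, X_t − F_{X_t} + X_1F_{X_0}, X_1) and g_{t1}²(X) = (X_0, X_t − F_{X_t}, X_1 − F_{X_1} + X_0F_{X_t}) if and only if F_{X_0}(X;a) = F_{X_t}(X;a) = F_{X_1}(X;a) = 0, i.e. if and only if X is a singular point of the surface {F(·;a) = 0}. -/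
noncomputable section

/-- **Fixed points of the PVI monodromy action are exactly the singular points:**
for `X` on the surface `{F(·;a) = 0}`, `X` is fixed by both `g_{0t}²` and `g_{t1}²`
iff all three partial derivatives of `F` vanish at `X`. -/
theorem monodromy_fixed_points_iff_singular
    (a0 aT a1 aI : ℂ) (X0 XT X1 : ℂ) (h : FVI a0 aT a1 aI X0 XT X1 = 0) :
    (((X0 - FVIX0 a0 aT a1 aI X0 XT X1,
       XT - FVIXT a0 aT a1 aI X0 XT X1 + X1 * FVIX0 a0 aT a1 aI X0 XT X1,
       X1) : ℂ × ℂ × ℂ) = (X0, XT, X1) ∧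
     ((X0,
       XT - FVIXT a0 aT a1 aI X0 XT X1,
       X1 - FVIX1 a0 aT a1 aI X0 XT X1 + X0 * FVIXT a0 aT a1 aI X0 XT X1) : ℂ × ℂ × ℂ)
        = (X0, XT, X1))
    ↔ (FVIX0 a0 aT a1 aI X0 XT X1 = 0 ∧ FVIXT a0 aT a1 aI X0 XT X1 = 0 ∧
       FVIX1 a0 aT a1 aI X0 XT X1 = 0) := by
  constructor
  · rintro ⟨h1, h2⟩
    simp only [Prod.mk.injEq] at h1 h2
    obtain ⟨e1, e2, -⟩ := h1
    obtain ⟨-, e3, e4⟩ := h2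
    have f0 : FVIX0 a0 aT a1 aI X0 XT X1 = 0 := by linear_combination X0 - e1
    have ft : FVIXT a0 aT a1 aI X0 XT X1 = 0 := by linear_combination XT - e3
    refine ⟨f0, ft, ?_⟩
    linear_combination X1 - e4 + X0 * ft
  · rintro ⟨f0, ft, f1⟩
    rw [f0, ft, f1]
    norm_num
end
end

section
/- Let α, β, γ, δ, c_t, c_1 ∈ ℂ with αδ − βγ = 1, and let e_t, e_1 ∈ ℂ∖{0}. Set ẽ_1 = −e_te_1, a_0 = α + δ, a_∞ = δ/(e_te_1) + e_te_1(α + c_tβ + c_1γ + c_tc_1δ), and define the coordinates X_0 = e_te_1 + (e_te_1)^{-1} + e_te_1c_tc_1, W_t = e_te_1(α + γc_1), U_1 = δ. Then F̃(X_0, W_t, U_1; a_0, ẽ_1, a_∞) = 0, i.e. X_0W_tU_1 + W_t² + U_1² − θ̃_0X_0 − θ̃_tW_t − θ̃_1U_1 + θ̃_∞ = 0. -/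
noncomputable section

/-- The Painlevé V Fricke polynomial `F̃(X0, Wt, U1; a0, ẽ1, a∞)`, with
`θ̃_0 = −ẽ1`, `θ̃_t = a∞ − ẽ1 a0`, `θ̃_1 = a0 − ẽ1 a∞`, `θ̃_∞ = 1 − ẽ1 a0 a∞ + ẽ1²`. -/
def FV (a0 te1 aI X0 WT U1 : ℂ) : ℂ :=
  X0 * WT * U1 + WT ^ 2 + U1 ^ 2
    - (-te1) * X0 - (aI - te1 * a0) * WT - (a0 - te1 * aI) * U1
    + (1 - te1 * a0 * aI + te1 ^ 2)

/-- **The confluent monodromy/Stokes data satisfy the PV Fricke relation.**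
Here `(α,β,γ,δ)` are the entries of `M_0 ∈ SL(2,ℂ)`, `c_t, c_1` the unfolded Stokes
data, `ẽ_1 = −e_te_1`, `a_0 = tr M_0`, `a_∞ = δ/(e_te_1) + e_te_1(α + c_tβ + c_1γ + c_tc_1δ)`,
and the coordinates are `X_0 = e_te_1 + (e_te_1)⁻¹ + e_te_1c_tc_1`, `W_t = e_te_1(α + γc_1)`,
`U_1 = δ`. -/
theorem confluent_monodromy_satisfies_PV_fricke
    (α β γ δ ct c1 : ℂ) (hdet : α * δ - β * γ = 1)
    (et e1 : ℂ) (het : et ≠ 0) (he1 : e1 ≠ 0)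
    (te1 a0 aI X0 WT U1 : ℂ)
    (hte1 : te1 = -(et * e1))
    (ha0 : a0 = α + δ)
    (haI : aI = δ / (et * e1) + et * e1 * (α + ct * β + c1 * γ + ct * c1 * δ))
    (hX0 : X0 = et * e1 + (et * e1)⁻¹ + et * e1 * ct * c1)
    (hWT : WT = et * e1 * (α + γ * c1))
    (hU1 : U1 = δ) :
    FV a0 te1 aI X0 WT U1 = 0 := by
  subst hte1 ha0 haI hX0 hWT hU1
  have h : et*e1 ≠ 0 := mul_ne_zero het he1
  unfold FV
  field_simp
  ring_nf
  linear_combination (ct * c1 * (et*e1)^2) * hdet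
end
end

section
/- Let a_0, a_∞ ∈ ℂ and ẽ_1 ∈ ℂ∖{0}. Then for all X_0, W_t, U_1 ∈ ℂ: F̃(X_0,W_t,U_1; ã) = (X_0 + ẽ_1 + ẽ_1^{-1})·F̃_{X_0} − ẽ_1·(W_t − U_1/ẽ_1 − a_∞)·(U_1 − W_t/ẽ_1 − a_0), where F̃_{X_0} = U_1W_t + ẽ_1. -/
noncomputable section

/-- **Line decomposition of the PV Fricke polynomial through `F̃_{X_0}`:**
`F̃ = (X_0 + ẽ_1 + ẽ_1⁻¹) F̃_{X_0} − ẽ_1 (W_t − U_1/ẽ_1 − a_∞)(U_1 − W_t/ẽ_1 − a_0)`,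
where `F̃_{X_0} = U_1W_t + ẽ_1`. -/
theorem PV_fricke_decomposition_X0
    (a0 aI : ℂ) (te1 : ℂ) (hte1 : te1 ≠ 0) (X0 WT U1 : ℂ) :
    FV a0 te1 aI X0 WT U1
      = (X0 + te1 + te1⁻¹) * (U1 * WT + te1)
        - te1 * (WT - U1 / te1 - aI) * (U1 - WT / te1 - a0) := by
  field_simp [FV]
  unfold FV
  ring
end
end

section
/- Let a_0 ∈ ℂ, ẽ_1 ∈ ℂ∖{0}, e_∞ ∈ ℂ∖{0}, and set a_∞ = e_∞ + e_∞^{-1}. Then for all X_0, W_t, U_1 ∈ ℂ: F̃(X_0,W_t,U_1; ã) = (W_t − e_∞)·(F̃_{W_t} − W_t + e_∞) + (U_1 + ẽ_1/e_∞)·(e_∞X_0 + U_1 + ẽ_1e_∞ − a_0), where F̃_{W_t} = X_0U_1 + 2W_t − θ̃_t. -/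
noncomputable section

/-- **Line decomposition of the PV Fricke polynomial through `F̃_{W_t}`:**
with `a_∞ = e_∞ + e_∞⁻¹`,
`F̃ = (W_t − e_∞)(F̃_{W_t} − W_t + e_∞) + (U_1 + ẽ_1/e_∞)(e_∞X_0 + U_1 + ẽ_1e_∞ − a_0)`,
where `F̃_{W_t} = X_0U_1 + 2W_t − θ̃_t`. -/
theorem PV_fricke_decomposition_Wt
    (a0 : ℂ) (te1 : ℂ) (hte1 : te1 ≠ 0) (eI : ℂ) (heI : eI ≠ 0)
    (aI : ℂ) (haI : aI = eI + eI⁻¹) (X0 WT U1 : ℂ)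
    (FW : ℂ) (hFW : FW = X0 * U1 + 2 * WT - (aI - te1 * a0)) :
    FV a0 te1 aI X0 WT U1
      = (WT - eI) * (FW - WT + eI)
        + (U1 + te1 / eI) * (eI * X0 + U1 + te1 * eI - a0) := by
  subst hFW haI
  unfold FV
  field_simp [FV]
  ring
end
end

section
/- Let e_0, e_t, e_1, e_∞ ∈ ℂ∖{0} and set a_0 = e_0 + e_0^{-1}, a_∞ = e_∞ + e_∞^{-1}, ã_1 = −e_te_1 − (e_te_1)^{-1}. Then a_0² + ã_1² + a_∞² + a_0ã_1a_∞ − 4 = (e_0e_te_1e_∞ − 1)(e_0e_te_1 − e_∞)(e_te_1e_∞ − e_0)(e_te_1 − e_0e_∞) / (e_0e_te_1e_∞)². -/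
/-- **The singularity polynomial of the PV character variety in terms of exponents:**
with `a_0 = e_0 + e_0⁻¹`, `a_∞ = e_∞ + e_∞⁻¹`, `ã_1 = −e_te_1 − (e_te_1)⁻¹`,
`a_0² + ã_1² + a_∞² + a_0ã_1a_∞ − 4
  = (e_0e_te_1e_∞ − 1)(e_0e_te_1 − e_∞)(e_te_1e_∞ − e_0)(e_te_1 − e_0e_∞)/(e_0e_te_1e_∞)²`. -/
theorem PV_singularity_polynomial_factorization
    (e0 et e1 eI : ℂ) (he0 : e0 ≠ 0) (het : et ≠ 0) (he1 : e1 ≠ 0) (heI : eI ≠ 0)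
    (a0 aI ta1 : ℂ)
    (ha0 : a0 = e0 + e0⁻¹) (haI : aI = eI + eI⁻¹)
    (hta1 : ta1 = -(et * e1) - (et * e1)⁻¹) :
    a0 ^ 2 + ta1 ^ 2 + aI ^ 2 + a0 * ta1 * aI - 4
      = (e0 * et * e1 * eI - 1) * (e0 * et * e1 - eI) * (et * e1 * eI - e0) *
          (et * e1 - e0 * eI) / (e0 * et * e1 * eI) ^ 2 := by
  have A0 : a0 * e0 = e0 ^ 2 + 1 := by
    rw [ha0]; field_simp
  have AI : aI * eI = eI ^ 2 + 1 := by
    rw [haI]; field_simp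
  have T1 : ta1 * (et * e1) = -((et * e1) ^ 2 + 1) := by
    rw [hta1]; field_simp; ring
  have hD : ((e0 * et * e1 * eI) ^ 2 : ℂ) ≠ 0 :=
    pow_ne_zero _ (by simp [he0, het, he1, heI])
  rw [eq_div_iff hD]
  linear_combination
    ((a0 * e0 + (e0 ^ 2 + 1)) * (et * e1 * eI) ^ 2
      + (ta1 * (et * e1)) * (aI * eI) * (e0 * et * e1 * eI)) * A0
    + ((ta1 * (et * e1) + -((et * e1) ^ 2 + 1)) * (e0 * eI) ^ 2
      + (e0 ^ 2 + 1) * (aI * eI) * (e0 * et * e1 * eI)) * T1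
    + ((aI * eI + (eI ^ 2 + 1)) * (e0 * et * e1) ^ 2
      + (e0 ^ 2 + 1) * (-((et * e1) ^ 2 + 1)) * (e0 * et * e1 * eI)) * AI
end

section
/- Work with 3×3 complex matrices with rows and columns indexed by (0,t,1), let E_{ij} denote the elementary matrix with 1 in position (i,j) and 0 elsewhere, and let i denote the imaginary unit. Let s_{0t}, s_{t0}, s_{01}, s_{10}, s_{1t} ∈ ℂ with s_{1t} ≠ 0, and e_0, e_t, e_1 ∈ ℂ∖{0}. Set S_{kl} = I + s_{kl}E_{kl}, N̄ = diag(e_0², e_t², e_1²), Ñ = diag(e_0², e_te_1, e_te_1), C_+ = I + (1/s_{1t})E_{t1} + (−i·e_t/(e_1s_{1t}) − 1)E_{11}, and C_− the matrix with rows (1,0,0), (0, 0, e_t/(e_1s_{1t})), (0, i, −i·e_t²/(e_1²s_{1t})). Then: (1) C_+ S_{10} S_{t0} C_+^{-1} = I + (s_{t0} + s_{10}/s_{1t})E_{t0} + (−i·(e_t/e_1)·(s_{10}/s_{1t}))E_{10}; (2) C_− Ñ^{-1} N̄ S_{01} S_{0t} N̄^{-1} Ñ C_−^{-1} = I + (s_{0t}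 + s_{01}s_{1t})E_{0t} + (−i·(e_1/e_t)·s_{0t})E_{01}. -/
noncomputable section

open Matrix Complex

set_option maxHeartbeats 2000000 in
/-- **Coefficients of the outer Stokes matrices in terms of the inner Stokes data.**
Rows/columns of the 3×3 matrices are indexed by `Fin 3`, where `0, 1, 2` stand for the
labels `0, t, 1`. With `S_{kl} = I + s_{kl}E_{kl}`, `N̄ = diag(e_0², e_t², e_1²)`,
`Ñ = diag(e_0², e_te_1, e_te_1)` and the connection matrices `C_±`, one has
`C_+ S_{10} S_{t0} C_+⁻¹ = I + (s_{t0} + s_{10}/s_{1t})E_{t0} + (−i(e_t/e_1)(s_{10}/s_{1t}))E_{10}`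
and `C_− Ñ⁻¹ N̄ S_{01} S_{0t} N̄⁻¹ Ñ C_−⁻¹ = I + (s_{0t} + s_{01}s_{1t})E_{0t} + (−i(e_1/e_t)s_{0t})E_{01}`. -/
theorem outer_stokes_matrices
    (s0t st0 s01 s10 s1t : ℂ) (hs1t : s1t ≠ 0)
    (e0 et e1 : ℂ) (he0 : e0 ≠ 0) (het : et ≠ 0) (he1 : e1 ≠ 0)
    (S0t St0 S01 S10 Nbar Ntil Cp Cm : Matrix (Fin 3) (Fin 3) ℂ)
    (hS0t : S0t = 1 + Matrix.single 0 1 s0t)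
    (hSt0 : St0 = 1 + Matrix.single 1 0 st0)
    (hS01 : S01 = 1 + Matrix.single 0 2 s01)
    (hS10 : S10 = 1 + Matrix.single 2 0 s10)
    (hNbar : Nbar = Matrix.diagonal ![e0 ^ 2, et ^ 2, e1 ^ 2])
    (hNtil : Ntil = Matrix.diagonal ![e0 ^ 2, et * e1, et * e1])
    (hCp : Cp = 1 + Matrix.single 1 2 (1 / s1t)
        + Matrix.single 2 2 (-Complex.I * et / (e1 * s1t) - 1))
    (hCm : Cm = !![1, 0, 0;
                   0, 0, et / (e1 * s1t);
                   0, Complex.I, -Complex.I * et ^ 2 / (e1 ^ 2 * s1t)]) :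
    Cp * S10 * St0 * Cp⁻¹
      = 1 + Matrix.single 1 0 (st0 + s10 / s1t)
          + Matrix.single 2 0 (-Complex.I * (et / e1) * (s10 / s1t)) ∧
    Cm * Ntil⁻¹ * Nbar * S01 * S0t * Nbar⁻¹ * Ntil * Cm⁻¹
      = 1 + Matrix.single 0 1 (s0t + s01 * s1t)
          + Matrix.single 0 2 (-Complex.I * (e1 / et) * s0t) := by

  have hdet : (-Complex.I * et / (e1 * s1t)) ≠ 0 := by
    field_simp
    simp [Complex.I_ne_zero, het, he1, hs1t]
  -- explicit inverse of Cp
  have hCpinv : Cp * !![1, 0, 0; 0, 1, -(1/s1t) / (-Complex.I * et / (e1 * s1t));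
      0, 0, (-Complex.I * et / (e1 * s1t))⁻¹] = 1 := by
    subst hCp
    ext i j
    fin_cases i <;> fin_cases j
    all_goals simp [Matrix.mul_apply, Fin.sum_univ_three, Matrix.single, Matrix.one_apply]
    all_goals try simp [Matrix.vecMul, dotProduct, Fin.sum_univ_three, Matrix.vecHead, Matrix.vecTail]
    all_goals try field_simp
    all_goals try ring
    all_goals ring_nf
    all_goals simp [Complex.I_sq, pow_succ]
    all_goals try ring
  have hCpI : Invertible Cp := invertibleOfRightInverse _ _ hCpinv
  have hCminv : Cm * !![1, 0, 0; 0, et / e1, -Complex.I;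
      0, (e1 * s1t) / et, 0] = 1 := by
    subst hCm
    ext i j
    fin_cases i <;> fin_cases j
    all_goals simp [Matrix.mul_apply, Fin.sum_univ_three, Matrix.one_apply]
    all_goals try simp [Matrix.vecMul, dotProduct, Fin.sum_univ_three, Matrix.vecHead, Matrix.vecTail]
    all_goals try field_simp
    all_goals try ring
    all_goals ring_nf
    all_goals simp [Complex.I_sq, pow_succ]
    all_goals try ring
  have hCmI : Invertible Cm := invertibleOfRightInverse _ _ hCminv
  have hNb : Nbar⁻¹ = Matrix.diagonal ![(e0 ^ 2)⁻¹, (et ^ 2)⁻¹, (e1 ^ 2)⁻¹] := by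
    apply Matrix.inv_eq_right_inv
    subst hNbar
    rw [Matrix.diagonal_mul_diagonal]
    ext i j
    fin_cases i <;> fin_cases j
    all_goals simp [Matrix.diagonal, Matrix.one_apply]
    all_goals try simp [Matrix.vecMul, dotProduct, Fin.sum_univ_three, Matrix.vecHead, Matrix.vecTail]
    all_goals try field_simp
    all_goals ring
  have hNt : Ntil⁻¹ = Matrix.diagonal ![(e0 ^ 2)⁻¹, (et * e1)⁻¹, (et * e1)⁻¹] := by
    apply Matrix.inv_eq_right_inv
    subst hNtil
    rw [Matrix.diagonal_mul_diagonal]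
    ext i j
    fin_cases i <;> fin_cases j
    all_goals simp [Matrix.diagonal, Matrix.one_apply]
    all_goals try simp [Matrix.vecMul, dotProduct, Fin.sum_univ_three, Matrix.vecHead, Matrix.vecTail]
    all_goals try field_simp
    all_goals ring
  have entry_tac : True := trivial
  constructor
  · rw [Matrix.mul_inv_eq_iff_eq_mul_of_invertible]
    have hP : S10 * St0 = !![1, 0, 0; st0, 1, 0; s10, 0, 1] := by
      rw [hS10, hSt0]
      ext i j
      fin_cases i <;> fin_cases j
      all_goals simp [Matrix.mul_apply, Fin.sum_univ_three, Matrix.single,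
        Matrix.one_apply, Matrix.vecHead, Matrix.vecTail]
    have hCp' : Cp = !![1, 0, 0; 0, 1, 1 / s1t; 0, 0, -Complex.I * et / (e1 * s1t)] := by
      rw [hCp]
      ext i j
      fin_cases i <;> fin_cases j
      all_goals simp [Matrix.single, Matrix.one_apply, Matrix.vecHead, Matrix.vecTail]
    have hR : (1 : Matrix (Fin 3) (Fin 3) ℂ) + Matrix.single 1 0 (st0 + s10 / s1t)
        + Matrix.single 2 0 (-Complex.I * (et / e1) * (s10 / s1t))
        = !![1, 0, 0; st0 + s10 / s1t, 1, 0; -Complex.I * (et / e1) * (s10 / s1t), 0, 1] := by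
      ext i j
      fin_cases i <;> fin_cases j
      all_goals simp [Matrix.single, Matrix.one_apply, Matrix.vecHead, Matrix.vecTail]
    rw [mul_assoc, hP, hCp', hR, Matrix.mul_fin_three, Matrix.mul_fin_three]
    ext i j
    fin_cases i <;> fin_cases j
    all_goals simp
    all_goals try field_simp
    all_goals try ring
    all_goals ring_nf
    all_goals try simp [Complex.I_sq, pow_succ]
    all_goals try field_simp
    all_goals try ring
    all_goals try ring_nf
  · rw [Matrix.mul_inv_eq_iff_eq_mul_of_invertible]
    have hD : Ntil⁻¹ * Nbar = !![1, 0, 0; 0, et / e1, 0; 0, 0, e1 / et] := by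
      rw [hNt, hNbar, Matrix.diagonal_mul_diagonal]
      ext i j
      fin_cases i <;> fin_cases j
      all_goals simp [Matrix.diagonal, Matrix.vecHead, Matrix.vecTail]
      all_goals field_simp
      all_goals ring
    have hD' : Nbar⁻¹ * Ntil = !![1, 0, 0; 0, e1 / et, 0; 0, 0, et / e1] := by
      rw [hNb, hNtil, Matrix.diagonal_mul_diagonal]
      ext i j
      fin_cases i <;> fin_cases j
      all_goals simp [Matrix.diagonal, Matrix.vecHead, Matrix.vecTail]
      all_goals field_simp
      all_goals ring
    have hP : S01 * S0t = !![1, s0t, s01; 0, 1, 0; 0, 0, 1] := by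
      rw [hS01, hS0t]
      ext i j
      fin_cases i <;> fin_cases j
      all_goals simp [Matrix.mul_apply, Fin.sum_univ_three, Matrix.single,
        Matrix.one_apply, Matrix.vecHead, Matrix.vecTail]
    have hR : (1 : Matrix (Fin 3) (Fin 3) ℂ) + Matrix.single 0 1 (s0t + s01 * s1t)
        + Matrix.single 0 2 (-Complex.I * (e1 / et) * s0t)
        = !![1, s0t + s01 * s1t, -Complex.I * (e1 / et) * s0t; 0, 1, 0; 0, 0, 1] := by
      ext i j
      fin_cases i <;> fin_cases j
      all_goals simp [Matrix.single, Matrix.one_apply, Matrix.vecHead, Matrix.vecTail]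
    rw [mul_assoc Cm Ntil⁻¹ Nbar, hD, mul_assoc _ S01 S0t, hP,
      mul_assoc _ Nbar⁻¹ Ntil, hD', hCm, hR,
      Matrix.mul_fin_three, Matrix.mul_fin_three, Matrix.mul_fin_three, Matrix.mul_fin_three]
    ext i j
    fin_cases i <;> fin_cases j
    all_goals simp
    all_goals try field_simp
    all_goals try ring
    all_goals try ring_nf
    all_goals try simp [Complex.I_sq, pow_succ]
    all_goals try field_simp
    all_goals try ring
    all_goals try ring_nf
end
end

section
/- Work with 3×3 complex matrices with rows and columns indexed by (0,t,1), and let E_{ij} denote the elementary matrix with 1 in position (i,j). Let s_{0t}, s_{t0}, s_{t1}, s_{1t}, s_{01}, s_{10} ∈ ℂ and e_0, e_t, e_1, e_∞ ∈ ℂ∖{0}. Set S_{kl} = I + s_{kl}E_{kl}, N̄ = diag(e_0², e_t², e_1²), M = S_{1t}S_{10}S_{t0}S_{t1}N̄S_{01}S_{0t}, and define X_0 = (e_t² + e_1² + e_1²s_{t1}s_{1t})/(e_te_1), X_t = (e_0² + e_1² + e_0²s_{10}s_{01})/(e_0e_1), X_1 = (e_0² + e_t² + e_0²s_{0t}s_{t0})/(e_0e_t),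 and a_l = e_l + e_l^{-1} for l ∈ {0,t,1,∞}. If the characteristic polynomial of M equals (λ − 1)(λ − e_0e_te_1/e_∞)(λ − e_0e_te_1e_∞), then F(X_0, X_t, X_1; a) = 0. -/
noncomputable section

open Matrix Polynomial

set_option maxHeartbeats 4000000 in
set_option maxRecDepth 20000 in
/-- **The trace coordinates built from the Stokes data of the 3×3 Birkhoff system satisfy
the Fricke relation.** Rows/columns are indexed by `Fin 3` (`0, 1, 2` standing for
`0, t, 1`). With `S_{kl} = I + s_{kl}E_{kl}`, `N̄ = diag(e_0², e_t², e_1²)` and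
`M = S_{1t}S_{10}S_{t0}S_{t1}N̄S_{01}S_{0t}`: if the characteristic polynomial of `M` is
`(λ−1)(λ−e_0e_te_1/e_∞)(λ−e_0e_te_1e_∞)`, then `F(X_0, X_t, X_1; a) = 0`, where
`X_0 = (e_t² + e_1² + e_1²s_{t1}s_{1t})/(e_te_1)`, `X_t = (e_0² + e_1² + e_0²s_{10}s_{01})/(e_0e_1)`,
`X_1 = (e_0² + e_t² + e_0²s_{0t}s_{t0})/(e_0e_t)` and `a_l = e_l + e_l⁻¹`. -/
theorem stokes_data_satisfy_fricke
    (s0t st0 st1 s1t s01 s10 : ℂ)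
    (e0 et e1 eI : ℂ) (he0 : e0 ≠ 0) (het : et ≠ 0) (he1 : e1 ≠ 0) (heI : eI ≠ 0)
    (S0t St0 St1 S1t S01 S10 Nbar M : Matrix (Fin 3) (Fin 3) ℂ)
    (hS0t : S0t = 1 + Matrix.single 0 1 s0t)
    (hSt0 : St0 = 1 + Matrix.single 1 0 st0)
    (hSt1 : St1 = 1 + Matrix.single 1 2 st1)
    (hS1t : S1t = 1 + Matrix.single 2 1 s1t)
    (hS01 : S01 = 1 + Matrix.single 0 2 s01)
    (hS10 : S10 = 1 + Matrix.single 2 0 s10)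
    (hNbar : Nbar = Matrix.diagonal ![e0 ^ 2, et ^ 2, e1 ^ 2])
    (hM : M = S1t * S10 * St0 * St1 * Nbar * S01 * S0t)
    (hchar : M.charpoly
      = (X - C 1) * (X - C (e0 * et * e1 / eI)) * (X - C (e0 * et * e1 * eI)))
    (a0 aT a1 aI X0 XT X1 : ℂ)
    (ha0 : a0 = e0 + e0⁻¹) (haT : aT = et + et⁻¹)
    (ha1 : a1 = e1 + e1⁻¹) (haI : aI = eI + eI⁻¹)
    (hX0 : X0 = (et ^ 2 + e1 ^ 2 + e1 ^ 2 * st1 * s1t) / (et * e1))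
    (hXT : XT = (e0 ^ 2 + e1 ^ 2 + e0 ^ 2 * s10 * s01) / (e0 * e1))
    (hX1 : X1 = (e0 ^ 2 + et ^ 2 + e0 ^ 2 * s0t * st0) / (e0 * et)) :
    X0 * XT * X1 + X0 ^ 2 + XT ^ 2 + X1 ^ 2
      - (a0 * aI + aT * a1) * X0 - (aT * aI + a1 * a0) * XT - (a1 * aI + a0 * aT) * X1
      + (a0 * aT * a1 * aI + a0 ^ 2 + aT ^ 2 + a1 ^ 2 + aI ^ 2 - 4) = 0 := by
  have hMe : M = !![e0^2, s0t*e0^2, s01*e0^2;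
      st0*e0^2, et^2 + s0t*st0*e0^2, st1*e1^2 + st0*s01*e0^2;
      s10*e0^2 + st0*s1t*e0^2, s1t*et^2 + s0t*s10*e0^2 + s0t*st0*s1t*e0^2,
      e1^2 + s01*s10*e0^2 + st1*s1t*e1^2 + st0*s1t*s01*e0^2] := by
    subst hS0t hSt0 hSt1 hS1t hS01 hS10 hNbar hM
    ext i j
    fin_cases i <;> fin_cases j <;>
      simp [Matrix.mul_apply, Fin.sum_univ_three, Matrix.single, Matrix.one_apply,
        Matrix.diagonal] <;> ring
  have hcp : M.charpoly
      = X^3 - C (e1^2 + et^2 + e0^2 + s01*s10*e0^2 + st1*s1t*e1^2 + st0*s1t*s01*e0^2 + s0t*st0*e0^2) * X^2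
        + C (et^2*e1^2 + e0^2*e1^2 + e0^2*et^2 + s01*s10*e0^2*et^2 + st1*s1t*e0^2*e1^2 - s0t*st1*s10*e0^2*e1^2 + s0t*st0*e0^2*e1^2) * X
        - C (e0^2*et^2*e1^2) := by
    rw [hMe, Matrix.charpoly, Matrix.det_fin_three]
    simp [charmatrix_apply, Matrix.diagonal_apply, Fin.ext_iff]
    ring
  rw [hcp] at hchar
  have hex : (X - C (1:ℂ)) * (X - C (e0 * et * e1 / eI)) * (X - C (e0 * et * e1 * eI))
      = X^3 - C (1 + e0 * et * e1 / eI + e0 * et * e1 * eI) * X^2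
        + C (e0 * et * e1 / eI + e0 * et * e1 * eI
            + (e0 * et * e1 / eI) * (e0 * et * e1 * eI)) * X
        - C ((e0 * et * e1 / eI) * (e0 * et * e1 * eI)) := by
    simp only [_root_.map_add, _root_.map_mul, _root_.map_one]
    ring
  rw [hex] at hchar
  have htr : e1^2 + et^2 + e0^2 + s01*s10*e0^2 + st1*s1t*e1^2 + st0*s1t*s01*e0^2 + s0t*st0*e0^2 = 1 + e0 * et * e1 / eI + e0 * et * e1 * eI := by
    have h := congrArg (fun f => Polynomial.coeff f 2) hchar
    simp only [Polynomial.coeff_add, Polynomial.coeff_sub, Polynomial.coeff_C_mul,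
      Polynomial.coeff_X_pow, Polynomial.coeff_C, Polynomial.coeff_X, Polynomial.coeff_neg,
      if_true, if_false] at h
    norm_num at h
    linear_combination -h
  have hs2 : et^2*e1^2 + e0^2*e1^2 + e0^2*et^2 + s01*s10*e0^2*et^2 + st1*s1t*e0^2*e1^2 - s0t*st1*s10*e0^2*e1^2 + s0t*st0*e0^2*e1^2
      = e0 * et * e1 / eI + e0 * et * e1 * eI
        + (e0 * et * e1 / eI) * (e0 * et * e1 * eI) := by
    have h := congrArg (fun f => Polynomial.coeff f 1) hchar
    simp only [Polynomial.coeff_add, Polynomial.coeff_sub, Polynomial.coeff_C_mul,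
      Polynomial.coeff_X_pow, Polynomial.coeff_C, Polynomial.coeff_X, Polynomial.coeff_neg,
      if_true, if_false] at h
    norm_num at h
    linear_combination h
  have htr2 : (e1^2 + et^2 + e0^2 + s01*s10*e0^2 + st1*s1t*e1^2 + st0*s1t*s01*e0^2 + s0t*st0*e0^2) * eI = eI + e0*et*e1 + e0*et*e1*eI^2 := by
    rw [htr]; field_simp
  have hs22 : (et^2*e1^2 + e0^2*e1^2 + e0^2*et^2 + s01*s10*e0^2*et^2 + st1*s1t*e0^2*e1^2 - s0t*st1*s10*e0^2*e1^2 + s0t*st0*e0^2*e1^2) * eI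
      = e0*et*e1 + e0*et*e1*eI^2 + e0^2*et^2*e1^2*eI := by
    rw [hs2]; field_simp
  have hi0 : e0 * e0⁻¹ = 1 := mul_inv_cancel₀ he0
  have hit : et * et⁻¹ = 1 := mul_inv_cancel₀ het
  have hi1 : e1 * e1⁻¹ = 1 := mul_inv_cancel₀ he1
  have hiI : eI * eI⁻¹ = 1 := mul_inv_cancel₀ heI
  rw [hX0, hXT, hX1, ha0, haT, ha1, haI]
  linear_combination (e0*et^3*e1^3*eI^2*e0⁻¹^3*et⁻¹^3*e1⁻¹^3*eI⁻¹^3 - e0^2*et^2*e1^2*eI*e0⁻¹^3*et⁻¹^3*e1⁻¹^3*eI⁻¹^3 - e0^2*et^2*e1^2*eI^3*e0⁻¹^3*et⁻¹^3*e1⁻¹^3*eI⁻¹^3 + e0^3*et*e1^3*eI^2*e0⁻¹^3*et⁻¹^3*e1⁻¹^3*eI⁻¹^3 + e0^3*et^3*e1*eI^2*e0⁻¹^3*et⁻¹^3*e1⁻¹^3*eI⁻¹^3 - e0^3*et^3*e1^3*eI^2*e0⁻¹^3*et⁻¹^3*e1⁻¹^3*eI⁻¹^3 + s01*s10*e0^3*et^3*e1*eI^2*e0⁻¹^3*et⁻¹^3*e1⁻¹^3*eI⁻¹^3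 + st1*s1t*e0^3*et*e1^3*eI^2*e0⁻¹^3*et⁻¹^3*e1⁻¹^3*eI⁻¹^3 + st0*s1t*s01*e0^2*et^2*e1^2*eI*e0⁻¹^3*et⁻¹^3*e1⁻¹^3*eI⁻¹^3 - st0*s1t*s01*e0^3*et*e1*e0⁻¹^3*et⁻¹^3*e1⁻¹^3*eI⁻¹^3 - st0*s1t*s01*e0^3*et*e1*eI^2*e0⁻¹^3*et⁻¹^3*e1⁻¹^3*eI⁻¹^3 + st0*s1t*s01*e0^4*e1^2*eI*e0⁻¹^3*et⁻¹^3*e1⁻¹^3*eI⁻¹^3 + st0*s1t*s01*e0^4*et^2*eI*e0⁻¹^3*et⁻¹^3*e1⁻¹^3*eI⁻¹^3 - st0*s1t*s01*e0^4*et^2*e1^2*eI*e0⁻¹^3*et⁻¹^3*e1⁻¹^3*eI⁻¹^3 + st0*s1t*s01^2*s10*e0^4*et^2*eI*e0⁻¹^3*et⁻¹^3*e1⁻¹^3*eI⁻¹^3 + st0*st1*s1t^2*s01*e0^4*e1^2*eI*e0⁻¹^3*et⁻¹^3*e1⁻¹^3*eI⁻¹^3 + s0t*st0*e0^3*et*e1^3*eI^2*e0⁻¹^3*et⁻¹^3*e1⁻¹^3*eI⁻¹^3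 - s0t*st0*st1*s1t*s01*s10*e0^4*e1^2*eI*e0⁻¹^3*et⁻¹^3*e1⁻¹^3*eI⁻¹^3 + s0t*st0^2*s1t*s01*e0^4*e1^2*eI*e0⁻¹^3*et⁻¹^3*e1⁻¹^3*eI⁻¹^3) * htr2 + (st0*s1t*s01*e0^2*eI*e0⁻¹^3*et⁻¹^3*e1⁻¹^3*eI⁻¹^3 - st0*s1t*s01*e0^2*e1^2*eI*e0⁻¹^3*et⁻¹^3*e1⁻¹^3*eI⁻¹^3 - st0*s1t*s01*e0^2*et^2*eI*e0⁻¹^3*et⁻¹^3*e1⁻¹^3*eI⁻¹^3 + st0*s1t*s01*e0^3*et*e1*e0⁻¹^3*et⁻¹^3*e1⁻¹^3*eI⁻¹^3 - st0*s1t*s01*e0^4*eI*e0⁻¹^3*et⁻¹^3*e1⁻¹^3*eI⁻¹^3 - st0*s1t*s01^2*s10*e0^4*eI*e0⁻¹^3*et⁻¹^3*e1⁻¹^3*eI⁻¹^3 - st0*st1*s1t^2*s01*e0^2*e1^2*eI*e0⁻¹^3*et⁻¹^3*e1⁻¹^3*eI⁻¹^3 - st0^2*s1t^2*s01^2*e0^4*eI*e0⁻¹^3*et⁻¹^3*e1⁻¹^3*eI⁻¹^3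 - s0t*st0^2*s1t*s01*e0^4*eI*e0⁻¹^3*et⁻¹^3*e1⁻¹^3*eI⁻¹^3) * hs22
    + (2 - e1⁻¹^2 - et⁻¹^2 - e1*e1⁻¹ + e1^2*e1⁻¹^2 - e1^3*e1⁻¹ + e1^4*et⁻¹^2*e1⁻¹^2 - et*et⁻¹ + et*e1^3*eI^3*et⁻¹^3*e1⁻¹^3*eI⁻¹^3 - et*e1^5*eI^3*et⁻¹^3*e1⁻¹^3*eI⁻¹^3 + et^2*et⁻¹^2 + 2*et^2*e1^2*et⁻¹^2*e1⁻¹^2 - et^2*e1^2*eI^2*e0⁻¹*et⁻¹^3*e1⁻¹^3*eI⁻¹^3 - et^2*e1^2*eI^4*e0⁻¹*et⁻¹^3*e1⁻¹^3*eI⁻¹^3 + et^2*e1^4*eI^2*e0⁻¹*et⁻¹^3*e1⁻¹^3*eI⁻¹^3 + et^2*e1^4*eI^4*e0⁻¹*et⁻¹^3*e1⁻¹^3*eI⁻¹^3 - et^3*et⁻¹ + et^3*e1*eI^3*et⁻¹^3*e1⁻¹^3*eI⁻¹^3 - et^3*e1^3*eI*et⁻¹^3*e1⁻¹^3*eI⁻¹^3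 - 6*et^3*e1^3*eI^3*et⁻¹^3*e1⁻¹^3*eI⁻¹^3 + et^3*e1^3*eI^3*e0⁻¹^2*et⁻¹^3*e1⁻¹^3*eI⁻¹^3 - et^3*e1^3*eI^5*et⁻¹^3*e1⁻¹^3*eI⁻¹^3 + et^3*e1^5*eI^3*et⁻¹^3*e1⁻¹^3*eI⁻¹^3 - et^3*e1^5*eI^3*e0⁻¹^2*et⁻¹^3*e1⁻¹^3*eI⁻¹^3 + et^4*et⁻¹^2*e1⁻¹^2 + et^4*e1^2*eI^2*e0⁻¹*et⁻¹^3*e1⁻¹^3*eI⁻¹^3 + et^4*e1^2*eI^4*e0⁻¹*et⁻¹^3*e1⁻¹^3*eI⁻¹^3 + et^4*e1^4*eI^2*e0⁻¹*et⁻¹^3*e1⁻¹^3*eI⁻¹^3 + et^4*e1^4*eI^4*e0⁻¹*et⁻¹^3*e1⁻¹^3*eI⁻¹^3 - et^5*e1*eI^3*et⁻¹^3*e1⁻¹^3*eI⁻¹^3 + et^5*e1^3*eI^3*et⁻¹^3*e1⁻¹^3*eI⁻¹^3 - et^5*e1^3*eI^3*e0⁻¹^2*et⁻¹^3*e1⁻¹^3*eI⁻¹^3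 - 2*e0*et⁻¹*e1⁻¹*eI⁻¹ - e0*e0⁻¹*e1⁻¹^2 - e0*e0⁻¹*et⁻¹^2 - 2*e0*eI*et⁻¹*e1⁻¹ - e0*e1*et⁻¹*eI⁻¹ - e0*e1*e0⁻¹*e1⁻¹ - e0*e1*eI*et⁻¹ + 2*e0*e1^2*e0⁻¹*e1⁻¹^2 + e0*e1^4*e0⁻¹*et⁻¹^2*e1⁻¹^2 - e0*et*e1⁻¹*eI⁻¹ - e0*et*e0⁻¹*et⁻¹ - e0*et*eI*e1⁻¹ + e0*et*e1^3*eI^3*e0⁻¹*et⁻¹^3*e1⁻¹^3*eI⁻¹^3 - e0*et*e1^5*eI^3*e0⁻¹*et⁻¹^3*e1⁻¹^3*eI⁻¹^3 + 2*e0*et^2*e0⁻¹*et⁻¹^2 + 2*e0*et^2*e1^2*e0⁻¹*et⁻¹^2*e1⁻¹^2 + e0*et^2*e1^2*eI^2*et⁻¹^3*e1⁻¹^3*eI⁻¹^3 - e0*et^2*e1^2*eI^2*e0⁻¹^2*et⁻¹^3*e1⁻¹^3*eI⁻¹^3 + e0*et^2*e1^2*eI^4*et⁻¹^3*e1⁻¹^3*eI⁻¹^3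 - e0*et^2*e1^2*eI^4*e0⁻¹^2*et⁻¹^3*e1⁻¹^3*eI⁻¹^3 + e0*et^2*e1^4*eI^2*et⁻¹^3*e1⁻¹^3*eI⁻¹^3 + e0*et^2*e1^4*eI^2*e0⁻¹^2*et⁻¹^3*e1⁻¹^3*eI⁻¹^3 + e0*et^2*e1^4*eI^4*et⁻¹^3*e1⁻¹^3*eI⁻¹^3 + e0*et^2*e1^4*eI^4*e0⁻¹^2*et⁻¹^3*e1⁻¹^3*eI⁻¹^3 + e0*et^3*e1*eI^3*e0⁻¹*et⁻¹^3*e1⁻¹^3*eI⁻¹^3 - e0*et^3*e1^3*eI*e0⁻¹*et⁻¹^3*e1⁻¹^3*eI⁻¹^3 - 6*e0*et^3*e1^3*eI^3*e0⁻¹*et⁻¹^3*e1⁻¹^3*eI⁻¹^3 - e0*et^3*e1^3*eI^5*e0⁻¹*et⁻¹^3*e1⁻¹^3*eI⁻¹^3 + e0*et^3*e1^5*eI^3*e0⁻¹*et⁻¹^3*e1⁻¹^3*eI⁻¹^3 + e0*et^4*e0⁻¹*et⁻¹^2*e1⁻¹^2 + e0*et^4*e1^2*eI^2*et⁻¹^3*e1⁻¹^3*eI⁻¹^3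 + e0*et^4*e1^2*eI^2*e0⁻¹^2*et⁻¹^3*e1⁻¹^3*eI⁻¹^3 + e0*et^4*e1^2*eI^4*et⁻¹^3*e1⁻¹^3*eI⁻¹^3 + e0*et^4*e1^2*eI^4*e0⁻¹^2*et⁻¹^3*e1⁻¹^3*eI⁻¹^3 - e0*et^4*e1^4*eI^2*et⁻¹^3*e1⁻¹^3*eI⁻¹^3 + e0*et^4*e1^4*eI^2*e0⁻¹^2*et⁻¹^3*e1⁻¹^3*eI⁻¹^3 - e0*et^4*e1^4*eI^4*et⁻¹^3*e1⁻¹^3*eI⁻¹^3 + e0*et^4*e1^4*eI^4*e0⁻¹^2*et⁻¹^3*e1⁻¹^3*eI⁻¹^3 - e0*et^5*e1*eI^3*e0⁻¹*et⁻¹^3*e1⁻¹^3*eI⁻¹^3 + e0*et^5*e1^3*eI^3*e0⁻¹*et⁻¹^3*e1⁻¹^3*eI⁻¹^3 - e0^2*e1*e1⁻¹ + e0^2*e1^2*et⁻¹^2*e1⁻¹^2 - e0^2*et*et⁻¹ - e0^2*et*e1^3*eI^3*et⁻¹^3*e1⁻¹^3*eI⁻¹^3 + e0^2*et*e1^3*eI^3*e0⁻¹^2*et⁻¹^3*e1⁻¹^3*eI⁻¹^3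 - e0^2*et*e1^5*eI^3*e0⁻¹^2*et⁻¹^3*e1⁻¹^3*eI⁻¹^3 + e0^2*et^2*et⁻¹^2*e1⁻¹^2 + e0^2*et^2*e1^2*eI^2*e0⁻¹*et⁻¹^3*e1⁻¹^3*eI⁻¹^3 + e0^2*et^2*e1^2*eI^4*e0⁻¹*et⁻¹^3*e1⁻¹^3*eI⁻¹^3 + e0^2*et^2*e1^4*eI^2*e0⁻¹*et⁻¹^3*e1⁻¹^3*eI⁻¹^3 + e0^2*et^2*e1^4*eI^4*e0⁻¹*et⁻¹^3*e1⁻¹^3*eI⁻¹^3 - e0^2*et^3*e1*eI^3*et⁻¹^3*e1⁻¹^3*eI⁻¹^3 + e0^2*et^3*e1*eI^3*e0⁻¹^2*et⁻¹^3*e1⁻¹^3*eI⁻¹^3 - e0^2*et^3*e1^3*eI*e0⁻¹^2*et⁻¹^3*e1⁻¹^3*eI⁻¹^3 + e0^2*et^3*e1^3*eI^3*et⁻¹^3*e1⁻¹^3*eI⁻¹^3 - 6*e0^2*et^3*e1^3*eI^3*e0⁻¹^2*et⁻¹^3*e1⁻¹^3*eI⁻¹^3 - e0^2*et^3*e1^3*eI^5*e0⁻¹^2*et⁻¹^3*e1⁻¹^3*eI⁻¹^3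 + e0^2*et^3*e1^5*eI^3*e0⁻¹^2*et⁻¹^3*e1⁻¹^3*eI⁻¹^3 + e0^2*et^4*e1^2*eI^2*e0⁻¹*et⁻¹^3*e1⁻¹^3*eI⁻¹^3 + e0^2*et^4*e1^2*eI^4*e0⁻¹*et⁻¹^3*e1⁻¹^3*eI⁻¹^3 - e0^2*et^4*e1^4*eI^2*e0⁻¹*et⁻¹^3*e1⁻¹^3*eI⁻¹^3 - e0^2*et^4*e1^4*eI^4*e0⁻¹*et⁻¹^3*e1⁻¹^3*eI⁻¹^3 - e0^2*et^5*e1*eI^3*e0⁻¹^2*et⁻¹^3*e1⁻¹^3*eI⁻¹^3 + e0^2*et^5*e1^3*eI^3*e0⁻¹^2*et⁻¹^3*e1⁻¹^3*eI⁻¹^3 + e0^3*e0⁻¹*e1⁻¹^2 + e0^3*e0⁻¹*et⁻¹^2 + e0^3*e1^2*e0⁻¹*et⁻¹^2*e1⁻¹^2 - e0^3*et*e1^3*eI^3*e0⁻¹*et⁻¹^3*e1⁻¹^3*eI⁻¹^3 + e0^3*et^2*e0⁻¹*et⁻¹^2*e1⁻¹^2 + e0^3*et^2*e1^2*eI^2*e0⁻¹^2*et⁻¹^3*e1⁻¹^3*eI⁻¹^3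 + e0^3*et^2*e1^2*eI^4*e0⁻¹^2*et⁻¹^3*e1⁻¹^3*eI⁻¹^3 + e0^3*et^2*e1^4*eI^2*e0⁻¹^2*et⁻¹^3*e1⁻¹^3*eI⁻¹^3 + e0^3*et^2*e1^4*eI^4*e0⁻¹^2*et⁻¹^3*e1⁻¹^3*eI⁻¹^3 - e0^3*et^3*e1*eI^3*e0⁻¹*et⁻¹^3*e1⁻¹^3*eI⁻¹^3 + e0^3*et^3*e1^3*eI^3*e0⁻¹*et⁻¹^3*e1⁻¹^3*eI⁻¹^3 + e0^3*et^4*e1^2*eI^2*e0⁻¹^2*et⁻¹^3*e1⁻¹^3*eI⁻¹^3 + e0^3*et^4*e1^2*eI^4*e0⁻¹^2*et⁻¹^3*e1⁻¹^3*eI⁻¹^3 - e0^3*et^4*e1^4*eI^2*e0⁻¹^2*et⁻¹^3*e1⁻¹^3*eI⁻¹^3 - e0^3*et^4*e1^4*eI^4*e0⁻¹^2*et⁻¹^3*e1⁻¹^3*eI⁻¹^3 - e0^4*et*e1^3*eI^3*e0⁻¹^2*et⁻¹^3*e1⁻¹^3*eI⁻¹^3 - e0^4*et^3*e1*eI^3*e0⁻¹^2*et⁻¹^3*e1⁻¹^3*eI⁻¹^3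 + e0^4*et^3*e1^3*eI^3*e0⁻¹^2*et⁻¹^3*e1⁻¹^3*eI⁻¹^3 - s01*s10*e1⁻¹^2 - s01*s10*e1*e1⁻¹ + 2*s01*s10*e1^2*e1⁻¹^2 + s01*s10*et^2*e1^2*et⁻¹^2*e1⁻¹^2 + s01*s10*et^3*e1*eI^3*et⁻¹^3*e1⁻¹^3*eI⁻¹^3 - 2*s01*s10*et^3*e1^3*eI^3*et⁻¹^3*e1⁻¹^3*eI⁻¹^3 + s01*s10*et^4*et⁻¹^2*e1⁻¹^2 - s01*s10*et^5*e1*eI^3*et⁻¹^3*e1⁻¹^3*eI⁻¹^3 - s01*s10*e0*et⁻¹*e1⁻¹*eI⁻¹ - s01*s10*e0*e0⁻¹*e1⁻¹^2 - s01*s10*e0*eI*et⁻¹*e1⁻¹ - s01*s10*e0*e1*e0⁻¹*e1⁻¹ + 2*s01*s10*e0*e1^2*e0⁻¹*e1⁻¹^2 - s01*s10*e0*et*e1⁻¹*eI⁻¹ - s01*s10*e0*et*eI*e1⁻¹ + s01*s10*e0*et^2*e1^2*e0⁻¹*et⁻¹^2*e1⁻¹^2 + s01*s10*e0*et^2*e1^2*eI^2*et⁻¹^3*e1⁻¹^3*eI⁻¹^3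 + s01*s10*e0*et^2*e1^2*eI^4*et⁻¹^3*e1⁻¹^3*eI⁻¹^3 + s01*s10*e0*et^3*e1*eI^3*e0⁻¹*et⁻¹^3*e1⁻¹^3*eI⁻¹^3 - 2*s01*s10*e0*et^3*e1^3*eI^3*e0⁻¹*et⁻¹^3*e1⁻¹^3*eI⁻¹^3 + s01*s10*e0*et^4*e0⁻¹*et⁻¹^2*e1⁻¹^2 + s01*s10*e0*et^4*e1^2*eI^2*et⁻¹^3*e1⁻¹^3*eI⁻¹^3 + s01*s10*e0*et^4*e1^2*eI^4*et⁻¹^3*e1⁻¹^3*eI⁻¹^3 - s01*s10*e0*et^5*e1*eI^3*e0⁻¹*et⁻¹^3*e1⁻¹^3*eI⁻¹^3 + s01*s10*e0^2*e1⁻¹^2 - s01*s10*e0^2*e1*e1⁻¹ + s01*s10*e0^2*e1^2*et⁻¹^2*e1⁻¹^2 - s01*s10*e0^2*et*e1^3*eI^3*et⁻¹^3*e1⁻¹^3*eI⁻¹^3 + s01*s10*e0^2*et^2*et⁻¹^2*e1⁻¹^2 + s01*s10*e0^2*et^2*e1^2*eI^2*e0⁻¹*et⁻¹^3*e1⁻¹^3*eI⁻¹^3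 + s01*s10*e0^2*et^2*e1^2*eI^4*e0⁻¹*et⁻¹^3*e1⁻¹^3*eI⁻¹^3 - 2*s01*s10*e0^2*et^3*e1*eI^3*et⁻¹^3*e1⁻¹^3*eI⁻¹^3 + s01*s10*e0^2*et^3*e1*eI^3*e0⁻¹^2*et⁻¹^3*e1⁻¹^3*eI⁻¹^3 + s01*s10*e0^2*et^3*e1^3*eI^3*et⁻¹^3*e1⁻¹^3*eI⁻¹^3 - 2*s01*s10*e0^2*et^3*e1^3*eI^3*e0⁻¹^2*et⁻¹^3*e1⁻¹^3*eI⁻¹^3 + s01*s10*e0^2*et^4*e1^2*eI^2*e0⁻¹*et⁻¹^3*e1⁻¹^3*eI⁻¹^3 + s01*s10*e0^2*et^4*e1^2*eI^4*e0⁻¹*et⁻¹^3*e1⁻¹^3*eI⁻¹^3 - s01*s10*e0^2*et^5*e1*eI^3*e0⁻¹^2*et⁻¹^3*e1⁻¹^3*eI⁻¹^3 + 2*s01*s10*e0^3*e0⁻¹*e1⁻¹^2 + s01*s10*e0^3*e1^2*e0⁻¹*et⁻¹^2*e1⁻¹^2 - s01*s10*e0^3*et*e1^3*eI^3*e0⁻¹*et⁻¹^3*e1⁻¹^3*eI⁻¹^3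 + s01*s10*e0^3*et^2*e0⁻¹*et⁻¹^2*e1⁻¹^2 + s01*s10*e0^3*et^2*e1^2*eI^2*e0⁻¹^2*et⁻¹^3*e1⁻¹^3*eI⁻¹^3 + s01*s10*e0^3*et^2*e1^2*eI^4*e0⁻¹^2*et⁻¹^3*e1⁻¹^3*eI⁻¹^3 - 2*s01*s10*e0^3*et^3*e1*eI^3*e0⁻¹*et⁻¹^3*e1⁻¹^3*eI⁻¹^3 + s01*s10*e0^3*et^3*e1^3*eI^3*e0⁻¹*et⁻¹^3*e1⁻¹^3*eI⁻¹^3 + s01*s10*e0^3*et^4*e1^2*eI^2*e0⁻¹^2*et⁻¹^3*e1⁻¹^3*eI⁻¹^3 + s01*s10*e0^3*et^4*e1^2*eI^4*e0⁻¹^2*et⁻¹^3*e1⁻¹^3*eI⁻¹^3 - s01*s10*e0^4*et*e1^3*eI^3*e0⁻¹^2*et⁻¹^3*e1⁻¹^3*eI⁻¹^3 - 2*s01*s10*e0^4*et^3*e1*eI^3*e0⁻¹^2*et⁻¹^3*e1⁻¹^3*eI⁻¹^3 + s01*s10*e0^4*et^3*e1^3*eI^3*e0⁻¹^2*et⁻¹^3*e1⁻¹^3*eI⁻¹^3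 + s01^2*s10^2*e0^2*e1⁻¹^2 - s01^2*s10^2*e0^2*et^3*e1*eI^3*et⁻¹^3*e1⁻¹^3*eI⁻¹^3 + s01^2*s10^2*e0^3*e0⁻¹*e1⁻¹^2 - s01^2*s10^2*e0^3*et^3*e1*eI^3*e0⁻¹*et⁻¹^3*e1⁻¹^3*eI⁻¹^3 - s01^2*s10^2*e0^4*et^3*e1*eI^3*e0⁻¹^2*et⁻¹^3*e1⁻¹^3*eI⁻¹^3 + st1*s1t*e1^4*et⁻¹^2*e1⁻¹^2 + st1*s1t*et*e1^3*eI^3*et⁻¹^3*e1⁻¹^3*eI⁻¹^3 - 2*st1*s1t*et*e1^5*eI^3*et⁻¹^3*e1⁻¹^3*eI⁻¹^3 + st1*s1t*et^2*e1^2*et⁻¹^2*e1⁻¹^2 + st1*s1t*et^2*e1^4*eI^2*e0⁻¹*et⁻¹^3*e1⁻¹^3*eI⁻¹^3 + st1*s1t*et^2*e1^4*eI^4*e0⁻¹*et⁻¹^3*e1⁻¹^3*eI⁻¹^3 - 2*st1*s1t*et^3*e1^3*eI^3*et⁻¹^3*e1⁻¹^3*eI⁻¹^3 + st1*s1t*et^3*e1^5*eI^3*et⁻¹^3*e1⁻¹^3*eI⁻¹^3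 - st1*s1t*et^3*e1^5*eI^3*e0⁻¹^2*et⁻¹^3*e1⁻¹^3*eI⁻¹^3 + st1*s1t*e0*e1^4*e0⁻¹*et⁻¹^2*e1⁻¹^2 + st1*s1t*e0*et*e1^3*eI^3*e0⁻¹*et⁻¹^3*e1⁻¹^3*eI⁻¹^3 - 2*st1*s1t*e0*et*e1^5*eI^3*e0⁻¹*et⁻¹^3*e1⁻¹^3*eI⁻¹^3 + st1*s1t*e0*et^2*e1^2*e0⁻¹*et⁻¹^2*e1⁻¹^2 + st1*s1t*e0*et^2*e1^4*eI^2*et⁻¹^3*e1⁻¹^3*eI⁻¹^3 + st1*s1t*e0*et^2*e1^4*eI^2*e0⁻¹^2*et⁻¹^3*e1⁻¹^3*eI⁻¹^3 + st1*s1t*e0*et^2*e1^4*eI^4*et⁻¹^3*e1⁻¹^3*eI⁻¹^3 + st1*s1t*e0*et^2*e1^4*eI^4*e0⁻¹^2*et⁻¹^3*e1⁻¹^3*eI⁻¹^3 - 2*st1*s1t*e0*et^3*e1^3*eI^3*e0⁻¹*et⁻¹^3*e1⁻¹^3*eI⁻¹^3 + st1*s1t*e0*et^3*e1^5*eI^3*e0⁻¹*et⁻¹^3*e1⁻¹^3*eI⁻¹^3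 + st1*s1t*e0^2*e1^2*et⁻¹^2*e1⁻¹^2 - st1*s1t*e0^2*et*e1^3*eI^3*et⁻¹^3*e1⁻¹^3*eI⁻¹^3 + st1*s1t*e0^2*et*e1^3*eI^3*e0⁻¹^2*et⁻¹^3*e1⁻¹^3*eI⁻¹^3 - 2*st1*s1t*e0^2*et*e1^5*eI^3*e0⁻¹^2*et⁻¹^3*e1⁻¹^3*eI⁻¹^3 + st1*s1t*e0^2*et^2*e1^4*eI^2*e0⁻¹*et⁻¹^3*e1⁻¹^3*eI⁻¹^3 + st1*s1t*e0^2*et^2*e1^4*eI^4*e0⁻¹*et⁻¹^3*e1⁻¹^3*eI⁻¹^3 - 2*st1*s1t*e0^2*et^3*e1^3*eI^3*e0⁻¹^2*et⁻¹^3*e1⁻¹^3*eI⁻¹^3 + st1*s1t*e0^2*et^3*e1^5*eI^3*e0⁻¹^2*et⁻¹^3*e1⁻¹^3*eI⁻¹^3 + st1*s1t*e0^3*e1^2*e0⁻¹*et⁻¹^2*e1⁻¹^2 - st1*s1t*e0^3*et*e1^3*eI^3*e0⁻¹*et⁻¹^3*e1⁻¹^3*eI⁻¹^3 + st1*s1t*e0^3*et^2*e1^4*eI^2*e0⁻¹^2*et⁻¹^3*e1⁻¹^3*eI⁻¹^3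 + st1*s1t*e0^3*et^2*e1^4*eI^4*e0⁻¹^2*et⁻¹^3*e1⁻¹^3*eI⁻¹^3 - st1*s1t*e0^4*et*e1^3*eI^3*e0⁻¹^2*et⁻¹^3*e1⁻¹^3*eI⁻¹^3 + st1*s1t*s01*s10*et^2*e1^2*et⁻¹^2*e1⁻¹^2 - st1*s1t*s01*s10*et^3*e1^3*eI^3*et⁻¹^3*e1⁻¹^3*eI⁻¹^3 + st1*s1t*s01*s10*e0*et^2*e1^2*e0⁻¹*et⁻¹^2*e1⁻¹^2 - st1*s1t*s01*s10*e0*et^3*e1^3*eI^3*e0⁻¹*et⁻¹^3*e1⁻¹^3*eI⁻¹^3 + st1*s1t*s01*s10*e0^2*e1^2*et⁻¹^2*e1⁻¹^2 - st1*s1t*s01*s10*e0^2*et*e1^3*eI^3*et⁻¹^3*e1⁻¹^3*eI⁻¹^3 - st1*s1t*s01*s10*e0^2*et^3*e1^3*eI^3*e0⁻¹^2*et⁻¹^3*e1⁻¹^3*eI⁻¹^3 + st1*s1t*s01*s10*e0^3*e1^2*e0⁻¹*et⁻¹^2*e1⁻¹^2 - st1*s1t*s01*s10*e0^3*et*e1^3*eI^3*e0⁻¹*et⁻¹^3*e1⁻¹^3*eI⁻¹^3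 - st1*s1t*s01*s10*e0^4*et*e1^3*eI^3*e0⁻¹^2*et⁻¹^3*e1⁻¹^3*eI⁻¹^3 - st1^2*s1t^2*et*e1^5*eI^3*et⁻¹^3*e1⁻¹^3*eI⁻¹^3 - st1^2*s1t^2*e0*et*e1^5*eI^3*e0⁻¹*et⁻¹^3*e1⁻¹^3*eI⁻¹^3 - st1^2*s1t^2*e0^2*et*e1^5*eI^3*e0⁻¹^2*et⁻¹^3*e1⁻¹^3*eI⁻¹^3 - s0t*st0*et⁻¹^2 + s0t*st0*e1^4*et⁻¹^2*e1⁻¹^2 - s0t*st0*et*et⁻¹ + s0t*st0*et*e1^3*eI^3*et⁻¹^3*e1⁻¹^3*eI⁻¹^3 - s0t*st0*et*e1^5*eI^3*et⁻¹^3*e1⁻¹^3*eI⁻¹^3 + 2*s0t*st0*et^2*et⁻¹^2 + s0t*st0*et^2*e1^2*et⁻¹^2*e1⁻¹^2 - 2*s0t*st0*et^3*e1^3*eI^3*et⁻¹^3*e1⁻¹^3*eI⁻¹^3 - s0t*st0*e0*et⁻¹*e1⁻¹*eI⁻¹ - s0t*st0*e0*e0⁻¹*et⁻¹^2 - s0t*st0*e0*eI*et⁻¹*e1⁻¹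 - s0t*st0*e0*e1*et⁻¹*eI⁻¹ - s0t*st0*e0*e1*eI*et⁻¹ + s0t*st0*e0*e1^4*e0⁻¹*et⁻¹^2*e1⁻¹^2 - s0t*st0*e0*et*e0⁻¹*et⁻¹ + s0t*st0*e0*et*e1^3*eI^3*e0⁻¹*et⁻¹^3*e1⁻¹^3*eI⁻¹^3 - s0t*st0*e0*et*e1^5*eI^3*e0⁻¹*et⁻¹^3*e1⁻¹^3*eI⁻¹^3 + 2*s0t*st0*e0*et^2*e0⁻¹*et⁻¹^2 + s0t*st0*e0*et^2*e1^2*e0⁻¹*et⁻¹^2*e1⁻¹^2 + s0t*st0*e0*et^2*e1^2*eI^2*et⁻¹^3*e1⁻¹^3*eI⁻¹^3 + s0t*st0*e0*et^2*e1^2*eI^4*et⁻¹^3*e1⁻¹^3*eI⁻¹^3 + s0t*st0*e0*et^2*e1^4*eI^2*et⁻¹^3*e1⁻¹^3*eI⁻¹^3 + s0t*st0*e0*et^2*e1^4*eI^4*et⁻¹^3*e1⁻¹^3*eI⁻¹^3 - 2*s0t*st0*e0*et^3*e1^3*eI^3*e0⁻¹*et⁻¹^3*e1⁻¹^3*eI⁻¹^3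 + s0t*st0*e0^2*et⁻¹^2 + s0t*st0*e0^2*e1^2*et⁻¹^2*e1⁻¹^2 - s0t*st0*e0^2*et*et⁻¹ - 2*s0t*st0*e0^2*et*e1^3*eI^3*et⁻¹^3*e1⁻¹^3*eI⁻¹^3 + s0t*st0*e0^2*et*e1^3*eI^3*e0⁻¹^2*et⁻¹^3*e1⁻¹^3*eI⁻¹^3 - s0t*st0*e0^2*et*e1^5*eI^3*e0⁻¹^2*et⁻¹^3*e1⁻¹^3*eI⁻¹^3 + s0t*st0*e0^2*et^2*et⁻¹^2*e1⁻¹^2 + s0t*st0*e0^2*et^2*e1^2*eI^2*e0⁻¹*et⁻¹^3*e1⁻¹^3*eI⁻¹^3 + s0t*st0*e0^2*et^2*e1^2*eI^4*e0⁻¹*et⁻¹^3*e1⁻¹^3*eI⁻¹^3 + s0t*st0*e0^2*et^2*e1^4*eI^2*e0⁻¹*et⁻¹^3*e1⁻¹^3*eI⁻¹^3 + s0t*st0*e0^2*et^2*e1^4*eI^4*e0⁻¹*et⁻¹^3*e1⁻¹^3*eI⁻¹^3 - s0t*st0*e0^2*et^3*e1*eI^3*et⁻¹^3*e1⁻¹^3*eI⁻¹^3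 + s0t*st0*e0^2*et^3*e1^3*eI^3*et⁻¹^3*e1⁻¹^3*eI⁻¹^3 - 2*s0t*st0*e0^2*et^3*e1^3*eI^3*e0⁻¹^2*et⁻¹^3*e1⁻¹^3*eI⁻¹^3 + 2*s0t*st0*e0^3*e0⁻¹*et⁻¹^2 + s0t*st0*e0^3*e1^2*e0⁻¹*et⁻¹^2*e1⁻¹^2 - 2*s0t*st0*e0^3*et*e1^3*eI^3*e0⁻¹*et⁻¹^3*e1⁻¹^3*eI⁻¹^3 + s0t*st0*e0^3*et^2*e0⁻¹*et⁻¹^2*e1⁻¹^2 + s0t*st0*e0^3*et^2*e1^2*eI^2*e0⁻¹^2*et⁻¹^3*e1⁻¹^3*eI⁻¹^3 + s0t*st0*e0^3*et^2*e1^2*eI^4*e0⁻¹^2*et⁻¹^3*e1⁻¹^3*eI⁻¹^3 + s0t*st0*e0^3*et^2*e1^4*eI^2*e0⁻¹^2*et⁻¹^3*e1⁻¹^3*eI⁻¹^3 + s0t*st0*e0^3*et^2*e1^4*eI^4*e0⁻¹^2*et⁻¹^3*e1⁻¹^3*eI⁻¹^3 - s0t*st0*e0^3*et^3*e1*eI^3*e0⁻¹*et⁻¹^3*e1⁻¹^3*eI⁻¹^3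 + s0t*st0*e0^3*et^3*e1^3*eI^3*e0⁻¹*et⁻¹^3*e1⁻¹^3*eI⁻¹^3 - 2*s0t*st0*e0^4*et*e1^3*eI^3*e0⁻¹^2*et⁻¹^3*e1⁻¹^3*eI⁻¹^3 - s0t*st0*e0^4*et^3*e1*eI^3*e0⁻¹^2*et⁻¹^3*e1⁻¹^3*eI⁻¹^3 + s0t*st0*e0^4*et^3*e1^3*eI^3*e0⁻¹^2*et⁻¹^3*e1⁻¹^3*eI⁻¹^3 + s0t*st0*s01*s10*e0^2*e1^2*et⁻¹^2*e1⁻¹^2 - s0t*st0*s01*s10*e0^2*et*e1^3*eI^3*et⁻¹^3*e1⁻¹^3*eI⁻¹^3 + s0t*st0*s01*s10*e0^2*et^2*et⁻¹^2*e1⁻¹^2 - s0t*st0*s01*s10*e0^2*et^3*e1*eI^3*et⁻¹^3*e1⁻¹^3*eI⁻¹^3 + s0t*st0*s01*s10*e0^3*e1^2*e0⁻¹*et⁻¹^2*e1⁻¹^2 - s0t*st0*s01*s10*e0^3*et*e1^3*eI^3*e0⁻¹*et⁻¹^3*e1⁻¹^3*eI⁻¹^3 + s0t*st0*s01*s10*e0^3*et^2*e0⁻¹*et⁻¹^2*e1⁻¹^2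 - s0t*st0*s01*s10*e0^3*et^3*e1*eI^3*e0⁻¹*et⁻¹^3*e1⁻¹^3*eI⁻¹^3 - s0t*st0*s01*s10*e0^4*et*e1^3*eI^3*e0⁻¹^2*et⁻¹^3*e1⁻¹^3*eI⁻¹^3 - s0t*st0*s01*s10*e0^4*et^3*e1*eI^3*e0⁻¹^2*et⁻¹^3*e1⁻¹^3*eI⁻¹^3 + s0t*st0*st1*s1t*e1^4*et⁻¹^2*e1⁻¹^2 - s0t*st0*st1*s1t*et*e1^5*eI^3*et⁻¹^3*e1⁻¹^3*eI⁻¹^3 + s0t*st0*st1*s1t*e0*e1^4*e0⁻¹*et⁻¹^2*e1⁻¹^2 - s0t*st0*st1*s1t*e0*et*e1^5*eI^3*e0⁻¹*et⁻¹^3*e1⁻¹^3*eI⁻¹^3 + s0t*st0*st1*s1t*e0^2*e1^2*et⁻¹^2*e1⁻¹^2 - s0t*st0*st1*s1t*e0^2*et*e1^3*eI^3*et⁻¹^3*e1⁻¹^3*eI⁻¹^3 - s0t*st0*st1*s1t*e0^2*et*e1^5*eI^3*e0⁻¹^2*et⁻¹^3*e1⁻¹^3*eI⁻¹^3 + s0t*st0*st1*s1t*e0^3*e1^2*e0⁻¹*et⁻¹^2*e1⁻¹^2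 - s0t*st0*st1*s1t*e0^3*et*e1^3*eI^3*e0⁻¹*et⁻¹^3*e1⁻¹^3*eI⁻¹^3 - s0t*st0*st1*s1t*e0^4*et*e1^3*eI^3*e0⁻¹^2*et⁻¹^3*e1⁻¹^3*eI⁻¹^3 + s0t*st0*st1*s1t*s01*s10*e0^2*e1^2*et⁻¹^2*e1⁻¹^2 - s0t*st0*st1*s1t*s01*s10*e0^2*et*e1^3*eI^3*et⁻¹^3*e1⁻¹^3*eI⁻¹^3 + s0t*st0*st1*s1t*s01*s10*e0^3*e1^2*e0⁻¹*et⁻¹^2*e1⁻¹^2 - s0t*st0*st1*s1t*s01*s10*e0^3*et*e1^3*eI^3*e0⁻¹*et⁻¹^3*e1⁻¹^3*eI⁻¹^3 - s0t*st0*st1*s1t*s01*s10*e0^4*et*e1^3*eI^3*e0⁻¹^2*et⁻¹^3*e1⁻¹^3*eI⁻¹^3 + s0t^2*st0^2*e0^2*et⁻¹^2 - s0t^2*st0^2*e0^2*et*e1^3*eI^3*et⁻¹^3*e1⁻¹^3*eI⁻¹^3 + s0t^2*st0^2*e0^3*e0⁻¹*et⁻¹^2 - s0t^2*st0^2*e0^3*et*e1^3*eI^3*e0⁻¹*et⁻¹^3*e1⁻¹^3*eI⁻¹^3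 - s0t^2*st0^2*e0^4*et*e1^3*eI^3*e0⁻¹^2*et⁻¹^3*e1⁻¹^3*eI⁻¹^3) * hi0 + (2 - e1⁻¹^2 - e0⁻¹^2 - e1*e1⁻¹ + e1*eI^3*e1⁻¹^3*eI⁻¹^3 + 3*e1^2*e1⁻¹^2 - e1^2*eI^2*e0⁻¹*et⁻¹*e1⁻¹^3*eI⁻¹^3 - e1^2*eI^4*e0⁻¹*et⁻¹*e1⁻¹^3*eI⁻¹^3 - e1^3*e1⁻¹ - e1^3*eI*e1⁻¹^3*eI⁻¹^3 - 6*e1^3*eI^3*e1⁻¹^3*eI⁻¹^3 + e1^3*eI^3*et⁻¹^2*e1⁻¹^3*eI⁻¹^3 + e1^3*eI^3*e0⁻¹^2*e1⁻¹^3*eI⁻¹^3 - e1^3*eI^5*e1⁻¹^3*eI⁻¹^3 + e1^4*e0⁻¹^2*e1⁻¹^2 + e1^4*eI^2*e0⁻¹*et⁻¹*e1⁻¹^3*eI⁻¹^3 + e1^4*eI^4*e0⁻¹*et⁻¹*e1⁻¹^3*eI⁻¹^3 + e1^5*eI^3*e1⁻¹^3*eI⁻¹^3 - e1^5*eI^3*et⁻¹^2*e1⁻¹^3*eI⁻¹^3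 - e1^5*eI^3*e0⁻¹^2*e1⁻¹^3*eI⁻¹^3 + et*et⁻¹ - et*et⁻¹*e1⁻¹^2 - 2*et*e0⁻¹*e1⁻¹*eI⁻¹ - et*e0⁻¹^2*et⁻¹ - 2*et*eI*e0⁻¹*e1⁻¹ - et*e1*et⁻¹*e1⁻¹ - et*e1*e0⁻¹*eI⁻¹ - et*e1*eI*e0⁻¹ + et*e1*eI^3*et⁻¹*e1⁻¹^3*eI⁻¹^3 + 4*et*e1^2*et⁻¹*e1⁻¹^2 + et*e1^2*eI^2*e0⁻¹*e1⁻¹^3*eI⁻¹^3 - et*e1^2*eI^2*e0⁻¹*et⁻¹^2*e1⁻¹^3*eI⁻¹^3 + et*e1^2*eI^4*e0⁻¹*e1⁻¹^3*eI⁻¹^3 - et*e1^2*eI^4*e0⁻¹*et⁻¹^2*e1⁻¹^3*eI⁻¹^3 - et*e1^3*eI*et⁻¹*e1⁻¹^3*eI⁻¹^3 - 6*et*e1^3*eI^3*et⁻¹*e1⁻¹^3*eI⁻¹^3 + et*e1^3*eI^3*e0⁻¹^2*et⁻¹*e1⁻¹^3*eI⁻¹^3 - et*e1^3*eI^5*et⁻¹*e1⁻¹^3*eI⁻¹^3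 + et*e1^4*e0⁻¹^2*et⁻¹*e1⁻¹^2 + et*e1^4*eI^2*e0⁻¹*e1⁻¹^3*eI⁻¹^3 + et*e1^4*eI^2*e0⁻¹*et⁻¹^2*e1⁻¹^3*eI⁻¹^3 + et*e1^4*eI^4*e0⁻¹*e1⁻¹^3*eI⁻¹^3 + et*e1^4*eI^4*e0⁻¹*et⁻¹^2*e1⁻¹^3*eI⁻¹^3 + et*e1^5*eI^3*et⁻¹*e1⁻¹^3*eI⁻¹^3 - et*e1^5*eI^3*e0⁻¹^2*et⁻¹*e1⁻¹^3*eI⁻¹^3 - et^2 + et^2*e1⁻¹^2 - et^2*e1*e1⁻¹ - et^2*e1*eI^3*e1⁻¹^3*eI⁻¹^3 + et^2*e1*eI^3*et⁻¹^2*e1⁻¹^3*eI⁻¹^3 + et^2*e1^2*e0⁻¹^2*e1⁻¹^2 + et^2*e1^2*eI^2*e0⁻¹*et⁻¹*e1⁻¹^3*eI⁻¹^3 + et^2*e1^2*eI^4*e0⁻¹*et⁻¹*e1⁻¹^3*eI⁻¹^3 - et^2*e1^3*eI*et⁻¹^2*e1⁻¹^3*eI⁻¹^3 + et^2*e1^3*eI^3*e1⁻¹^3*eI⁻¹^3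 - 6*et^2*e1^3*eI^3*et⁻¹^2*e1⁻¹^3*eI⁻¹^3 - et^2*e1^3*eI^3*e0⁻¹^2*e1⁻¹^3*eI⁻¹^3 + et^2*e1^3*eI^3*e0⁻¹^2*et⁻¹^2*e1⁻¹^3*eI⁻¹^3 - et^2*e1^3*eI^5*et⁻¹^2*e1⁻¹^3*eI⁻¹^3 + et^2*e1^4*eI^2*e0⁻¹*et⁻¹*e1⁻¹^3*eI⁻¹^3 + et^2*e1^4*eI^4*e0⁻¹*et⁻¹*e1⁻¹^3*eI⁻¹^3 + et^2*e1^5*eI^3*et⁻¹^2*e1⁻¹^3*eI⁻¹^3 - et^2*e1^5*eI^3*e0⁻¹^2*et⁻¹^2*e1⁻¹^3*eI⁻¹^3 + 2*et^3*et⁻¹*e1⁻¹^2 + et^3*e0⁻¹^2*et⁻¹ - et^3*e1*eI^3*et⁻¹*e1⁻¹^3*eI⁻¹^3 + et^3*e1^2*e0⁻¹^2*et⁻¹*e1⁻¹^2 + et^3*e1^2*eI^2*e0⁻¹*et⁻¹^2*e1⁻¹^3*eI⁻¹^3 + et^3*e1^2*eI^4*e0⁻¹*et⁻¹^2*e1⁻¹^3*eI⁻¹^3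 + et^3*e1^3*eI^3*et⁻¹*e1⁻¹^3*eI⁻¹^3 - et^3*e1^3*eI^3*e0⁻¹^2*et⁻¹*e1⁻¹^3*eI⁻¹^3 + et^3*e1^4*eI^2*e0⁻¹*et⁻¹^2*e1⁻¹^3*eI⁻¹^3 + et^3*e1^4*eI^4*e0⁻¹*et⁻¹^2*e1⁻¹^3*eI⁻¹^3 - et^4*e1*eI^3*et⁻¹^2*e1⁻¹^3*eI⁻¹^3 + et^4*e1^3*eI^3*et⁻¹^2*e1⁻¹^3*eI⁻¹^3 - et^4*e1^3*eI^3*e0⁻¹^2*et⁻¹^2*e1⁻¹^3*eI⁻¹^3 + e0*e1^2*eI^2*et⁻¹*e1⁻¹^3*eI⁻¹^3 + e0*e1^2*eI^4*et⁻¹*e1⁻¹^3*eI⁻¹^3 + e0*e1^4*eI^2*et⁻¹*e1⁻¹^3*eI⁻¹^3 + e0*e1^4*eI^4*et⁻¹*e1⁻¹^3*eI⁻¹^3 - e0*et*e1⁻¹*eI⁻¹ - e0*et*eI*e1⁻¹ + e0*et*e1^2*eI^2*e1⁻¹^3*eI⁻¹^3 + e0*et*e1^2*eI^2*et⁻¹^2*e1⁻¹^3*eI⁻¹^3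 + e0*et*e1^2*eI^4*e1⁻¹^3*eI⁻¹^3 + e0*et*e1^2*eI^4*et⁻¹^2*e1⁻¹^3*eI⁻¹^3 - e0*et*e1^4*eI^2*e1⁻¹^3*eI⁻¹^3 + e0*et*e1^4*eI^2*et⁻¹^2*e1⁻¹^3*eI⁻¹^3 - e0*et*e1^4*eI^4*e1⁻¹^3*eI⁻¹^3 + e0*et*e1^4*eI^4*et⁻¹^2*e1⁻¹^3*eI⁻¹^3 + e0*et^2*e1^2*eI^2*et⁻¹*e1⁻¹^3*eI⁻¹^3 + e0*et^2*e1^2*eI^4*et⁻¹*e1⁻¹^3*eI⁻¹^3 - e0*et^2*e1^4*eI^2*et⁻¹*e1⁻¹^3*eI⁻¹^3 - e0*et^2*e1^4*eI^4*et⁻¹*e1⁻¹^3*eI⁻¹^3 + e0*et^3*e1^2*eI^2*et⁻¹^2*e1⁻¹^3*eI⁻¹^3 + e0*et^3*e1^2*eI^4*et⁻¹^2*e1⁻¹^3*eI⁻¹^3 - e0*et^3*e1^4*eI^2*et⁻¹^2*e1⁻¹^3*eI⁻¹^3 - e0*et^3*e1^4*eI^4*et⁻¹^2*e1⁻¹^3*eI⁻¹^3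 - e0^2 + e0^2*e1⁻¹^2 - e0^2*e1*eI^3*e1⁻¹^3*eI⁻¹^3 + e0^2*e1^3*eI^3*e1⁻¹^3*eI⁻¹^3 - e0^2*e1^3*eI^3*et⁻¹^2*e1⁻¹^3*eI⁻¹^3 + e0^2*et*et⁻¹*e1⁻¹^2 - e0^2*et*e1*eI^3*et⁻¹*e1⁻¹^3*eI⁻¹^3 + e0^2*et*e1^3*eI^3*et⁻¹*e1⁻¹^3*eI⁻¹^3 - e0^2*et^2*e1*eI^3*et⁻¹^2*e1⁻¹^3*eI⁻¹^3 + e0^2*et^2*e1^3*eI^3*et⁻¹^2*e1⁻¹^3*eI⁻¹^3 + s01*s10*e1*eI^3*e1⁻¹^3*eI⁻¹^3 + s01*s10*e1^2*e1⁻¹^2 - 2*s01*s10*e1^3*eI^3*e1⁻¹^3*eI⁻¹^3 + s01*s10*et*e1*eI^3*et⁻¹*e1⁻¹^3*eI⁻¹^3 + s01*s10*et*e1^2*et⁻¹*e1⁻¹^2 - 2*s01*s10*et*e1^3*eI^3*et⁻¹*e1⁻¹^3*eI⁻¹^3 + s01*s10*et^2*e1⁻¹^2 - s01*s10*et^2*e1*eI^3*e1⁻¹^3*eI⁻¹^3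 + s01*s10*et^2*e1*eI^3*et⁻¹^2*e1⁻¹^3*eI⁻¹^3 - 2*s01*s10*et^2*e1^3*eI^3*et⁻¹^2*e1⁻¹^3*eI⁻¹^3 + s01*s10*et^3*et⁻¹*e1⁻¹^2 - s01*s10*et^3*e1*eI^3*et⁻¹*e1⁻¹^3*eI⁻¹^3 - s01*s10*et^4*e1*eI^3*et⁻¹^2*e1⁻¹^3*eI⁻¹^3 + s01*s10*e0*e1^2*eI^2*et⁻¹*e1⁻¹^3*eI⁻¹^3 + s01*s10*e0*e1^2*eI^4*et⁻¹*e1⁻¹^3*eI⁻¹^3 + s01*s10*e0*et*e1^2*eI^2*e1⁻¹^3*eI⁻¹^3 + s01*s10*e0*et*e1^2*eI^2*et⁻¹^2*e1⁻¹^3*eI⁻¹^3 + s01*s10*e0*et*e1^2*eI^4*e1⁻¹^3*eI⁻¹^3 + s01*s10*e0*et*e1^2*eI^4*et⁻¹^2*e1⁻¹^3*eI⁻¹^3 + s01*s10*e0*et^2*e1^2*eI^2*et⁻¹*e1⁻¹^3*eI⁻¹^3 + s01*s10*e0*et^2*e1^2*eI^4*et⁻¹*e1⁻¹^3*eI⁻¹^3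 + s01*s10*e0*et^3*e1^2*eI^2*et⁻¹^2*e1⁻¹^3*eI⁻¹^3 + s01*s10*e0*et^3*e1^2*eI^4*et⁻¹^2*e1⁻¹^3*eI⁻¹^3 + s01*s10*e0^2*e1⁻¹^2 - 2*s01*s10*e0^2*e1*eI^3*e1⁻¹^3*eI⁻¹^3 + s01*s10*e0^2*e1^3*eI^3*e1⁻¹^3*eI⁻¹^3 - s01*s10*e0^2*e1^3*eI^3*et⁻¹^2*e1⁻¹^3*eI⁻¹^3 + s01*s10*e0^2*et*et⁻¹*e1⁻¹^2 - 2*s01*s10*e0^2*et*e1*eI^3*et⁻¹*e1⁻¹^3*eI⁻¹^3 + s01*s10*e0^2*et*e1^3*eI^3*et⁻¹*e1⁻¹^3*eI⁻¹^3 - 2*s01*s10*e0^2*et^2*e1*eI^3*et⁻¹^2*e1⁻¹^3*eI⁻¹^3 + s01*s10*e0^2*et^2*e1^3*eI^3*et⁻¹^2*e1⁻¹^3*eI⁻¹^3 - s01^2*s10^2*e0^2*e1*eI^3*e1⁻¹^3*eI⁻¹^3 - s01^2*s10^2*e0^2*et*e1*eI^3*et⁻¹*e1⁻¹^3*eI⁻¹^3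 - s01^2*s10^2*e0^2*et^2*e1*eI^3*et⁻¹^2*e1⁻¹^3*eI⁻¹^3 + 2*st1*s1t*e1^2*e1⁻¹^2 - st1*s1t*e1^3*e1⁻¹ - 2*st1*s1t*e1^3*eI^3*e1⁻¹^3*eI⁻¹^3 + st1*s1t*e1^3*eI^3*et⁻¹^2*e1⁻¹^3*eI⁻¹^3 + st1*s1t*e1^4*e0⁻¹^2*e1⁻¹^2 + st1*s1t*e1^4*eI^2*e0⁻¹*et⁻¹*e1⁻¹^3*eI⁻¹^3 + st1*s1t*e1^4*eI^4*e0⁻¹*et⁻¹*e1⁻¹^3*eI⁻¹^3 + st1*s1t*e1^5*eI^3*e1⁻¹^3*eI⁻¹^3 - 2*st1*s1t*e1^5*eI^3*et⁻¹^2*e1⁻¹^3*eI⁻¹^3 - st1*s1t*e1^5*eI^3*e0⁻¹^2*e1⁻¹^3*eI⁻¹^3 + 3*st1*s1t*et*e1^2*et⁻¹*e1⁻¹^2 - 2*st1*s1t*et*e1^3*eI^3*et⁻¹*e1⁻¹^3*eI⁻¹^3 + st1*s1t*et*e1^4*e0⁻¹^2*et⁻¹*e1⁻¹^2 + st1*s1t*et*e1^4*eI^2*e0⁻¹*et⁻¹^2*e1⁻¹^3*eI⁻¹^3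 + st1*s1t*et*e1^4*eI^4*e0⁻¹*et⁻¹^2*e1⁻¹^3*eI⁻¹^3 + st1*s1t*et*e1^5*eI^3*et⁻¹*e1⁻¹^3*eI⁻¹^3 - st1*s1t*et*e1^5*eI^3*e0⁻¹^2*et⁻¹*e1⁻¹^3*eI⁻¹^3 - 2*st1*s1t*et^2*e1^3*eI^3*et⁻¹^2*e1⁻¹^3*eI⁻¹^3 + st1*s1t*et^2*e1^5*eI^3*et⁻¹^2*e1⁻¹^3*eI⁻¹^3 - st1*s1t*et^2*e1^5*eI^3*e0⁻¹^2*et⁻¹^2*e1⁻¹^3*eI⁻¹^3 + st1*s1t*e0*e1^4*eI^2*et⁻¹*e1⁻¹^3*eI⁻¹^3 + st1*s1t*e0*e1^4*eI^4*et⁻¹*e1⁻¹^3*eI⁻¹^3 + st1*s1t*e0*et*e1^4*eI^2*et⁻¹^2*e1⁻¹^3*eI⁻¹^3 + st1*s1t*e0*et*e1^4*eI^4*et⁻¹^2*e1⁻¹^3*eI⁻¹^3 - st1*s1t*e0^2*e1^3*eI^3*et⁻¹^2*e1⁻¹^3*eI⁻¹^3 + st1*s1t*s01*s10*e1^2*e1⁻¹^2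 - st1*s1t*s01*s10*e1^3*eI^3*e1⁻¹^3*eI⁻¹^3 + st1*s1t*s01*s10*et*e1^2*et⁻¹*e1⁻¹^2 - st1*s1t*s01*s10*et*e1^3*eI^3*et⁻¹*e1⁻¹^3*eI⁻¹^3 - st1*s1t*s01*s10*et^2*e1^3*eI^3*et⁻¹^2*e1⁻¹^3*eI⁻¹^3 - st1*s1t*s01*s10*e0^2*e1^3*eI^3*et⁻¹^2*e1⁻¹^3*eI⁻¹^3 - st1^2*s1t^2*e1^5*eI^3*et⁻¹^2*e1⁻¹^3*eI⁻¹^3 + s0t*st0 + s0t*st0*e1^2*e1⁻¹^2 - 2*s0t*st0*e1^3*eI^3*e1⁻¹^3*eI⁻¹^3 + s0t*st0*e1^3*eI^3*et⁻¹^2*e1⁻¹^3*eI⁻¹^3 - s0t*st0*e1^5*eI^3*et⁻¹^2*e1⁻¹^3*eI⁻¹^3 + 2*s0t*st0*et*et⁻¹ + s0t*st0*et*e1^2*et⁻¹*e1⁻¹^2 - 2*s0t*st0*et*e1^3*eI^3*et⁻¹*e1⁻¹^3*eI⁻¹^3 - 2*s0t*st0*et^2*e1^3*eI^3*et⁻¹^2*e1⁻¹^3*eI⁻¹^3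 + s0t*st0*e0*e1^2*eI^2*et⁻¹*e1⁻¹^3*eI⁻¹^3 + s0t*st0*e0*e1^2*eI^4*et⁻¹*e1⁻¹^3*eI⁻¹^3 + s0t*st0*e0*e1^4*eI^2*et⁻¹*e1⁻¹^3*eI⁻¹^3 + s0t*st0*e0*e1^4*eI^4*et⁻¹*e1⁻¹^3*eI⁻¹^3 + s0t*st0*e0*et*e1^2*eI^2*et⁻¹^2*e1⁻¹^3*eI⁻¹^3 + s0t*st0*e0*et*e1^2*eI^4*et⁻¹^2*e1⁻¹^3*eI⁻¹^3 + s0t*st0*e0*et*e1^4*eI^2*et⁻¹^2*e1⁻¹^3*eI⁻¹^3 + s0t*st0*e0*et*e1^4*eI^4*et⁻¹^2*e1⁻¹^3*eI⁻¹^3 - s0t*st0*e0^2 + s0t*st0*e0^2*e1⁻¹^2 - s0t*st0*e0^2*e1*eI^3*e1⁻¹^3*eI⁻¹^3 + s0t*st0*e0^2*e1^3*eI^3*e1⁻¹^3*eI⁻¹^3 - 2*s0t*st0*e0^2*e1^3*eI^3*et⁻¹^2*e1⁻¹^3*eI⁻¹^3 + s0t*st0*e0^2*et*et⁻¹*e1⁻¹^2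 - s0t*st0*e0^2*et*e1*eI^3*et⁻¹*e1⁻¹^3*eI⁻¹^3 + s0t*st0*e0^2*et*e1^3*eI^3*et⁻¹*e1⁻¹^3*eI⁻¹^3 - s0t*st0*e0^2*et^2*e1*eI^3*et⁻¹^2*e1⁻¹^3*eI⁻¹^3 + s0t*st0*e0^2*et^2*e1^3*eI^3*et⁻¹^2*e1⁻¹^3*eI⁻¹^3 + s0t*st0*s01*s10*e0^2*e1⁻¹^2 - s0t*st0*s01*s10*e0^2*e1*eI^3*e1⁻¹^3*eI⁻¹^3 - s0t*st0*s01*s10*e0^2*e1^3*eI^3*et⁻¹^2*e1⁻¹^3*eI⁻¹^3 + s0t*st0*s01*s10*e0^2*et*et⁻¹*e1⁻¹^2 - s0t*st0*s01*s10*e0^2*et*e1*eI^3*et⁻¹*e1⁻¹^3*eI⁻¹^3 - s0t*st0*s01*s10*e0^2*et^2*e1*eI^3*et⁻¹^2*e1⁻¹^3*eI⁻¹^3 - s0t*st0*st1*s1t*e1^5*eI^3*et⁻¹^2*e1⁻¹^3*eI⁻¹^3 - s0t*st0*st1*s1t*e0^2*e1^3*eI^3*et⁻¹^2*e1⁻¹^3*eI⁻¹^3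 - s0t*st0*st1*s1t*s01*s10*e0^2*e1^3*eI^3*et⁻¹^2*e1⁻¹^3*eI⁻¹^3 - s0t^2*st0^2*e0^2*e1^3*eI^3*et⁻¹^2*e1⁻¹^3*eI⁻¹^3) * hit + (4 - et⁻¹^2 - e0⁻¹^2 - eI*eI⁻¹^3 - eI^2*e0⁻¹*et⁻¹*e1⁻¹*eI⁻¹^3 - 6*eI^3*eI⁻¹^3 + eI^3*e1⁻¹^2*eI⁻¹^3 + eI^3*et⁻¹^2*eI⁻¹^3 + eI^3*e0⁻¹^2*eI⁻¹^3 - eI^4*e0⁻¹*et⁻¹*e1⁻¹*eI⁻¹^3 - eI^5*eI⁻¹^3 + 4*e1*e1⁻¹ - e1*et⁻¹^2*e1⁻¹ - 2*e1*e0⁻¹*et⁻¹*eI⁻¹ - e1*e0⁻¹^2*e1⁻¹ - e1*eI*e1⁻¹*eI⁻¹^3 - 2*e1*eI*e0⁻¹*et⁻¹ + e1*eI^2*e0⁻¹*et⁻¹*eI⁻¹^3 - e1*eI^2*e0⁻¹*et⁻¹*e1⁻¹^2*eI⁻¹^3 - 6*e1*eI^3*e1⁻¹*eI⁻¹^3 +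 e1*eI^3*et⁻¹^2*e1⁻¹*eI⁻¹^3 + e1*eI^3*e0⁻¹^2*e1⁻¹*eI⁻¹^3 + e1*eI^4*e0⁻¹*et⁻¹*eI⁻¹^3 - e1*eI^4*e0⁻¹*et⁻¹*e1⁻¹^2*eI⁻¹^3 - e1*eI^5*e1⁻¹*eI⁻¹^3 - 2*e1^2 + e1^2*et⁻¹^2 + e1^2*e0⁻¹^2 - e1^2*eI*e1⁻¹^2*eI⁻¹^3 + e1^2*eI^2*e0⁻¹*et⁻¹*e1⁻¹*eI⁻¹^3 + e1^2*eI^3*eI⁻¹^3 - 6*e1^2*eI^3*e1⁻¹^2*eI⁻¹^3 - e1^2*eI^3*et⁻¹^2*eI⁻¹^3 + e1^2*eI^3*et⁻¹^2*e1⁻¹^2*eI⁻¹^3 - e1^2*eI^3*e0⁻¹^2*eI⁻¹^3 + e1^2*eI^3*e0⁻¹^2*e1⁻¹^2*eI⁻¹^3 + e1^2*eI^4*e0⁻¹*et⁻¹*e1⁻¹*eI⁻¹^3 - e1^2*eI^5*e1⁻¹^2*eI⁻¹^3 + 2*e1^3*et⁻¹^2*e1⁻¹ + 2*e1^3*e0⁻¹^2*e1⁻¹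 + e1^3*eI^2*e0⁻¹*et⁻¹*e1⁻¹^2*eI⁻¹^3 + e1^3*eI^3*e1⁻¹*eI⁻¹^3 - e1^3*eI^3*et⁻¹^2*e1⁻¹*eI⁻¹^3 - e1^3*eI^3*e0⁻¹^2*e1⁻¹*eI⁻¹^3 + e1^3*eI^4*e0⁻¹*et⁻¹*e1⁻¹^2*eI⁻¹^3 + e1^4*eI^3*e1⁻¹^2*eI⁻¹^3 - e1^4*eI^3*et⁻¹^2*e1⁻¹^2*eI⁻¹^3 - e1^4*eI^3*e0⁻¹^2*e1⁻¹^2*eI⁻¹^3 + et*eI^2*e0⁻¹*e1⁻¹*eI⁻¹^3 + et*eI^4*e0⁻¹*e1⁻¹*eI⁻¹^3 - et*e1*e0⁻¹*eI⁻¹ - et*e1*eI*e0⁻¹ + et*e1*eI^2*e0⁻¹*eI⁻¹^3 + et*e1*eI^2*e0⁻¹*e1⁻¹^2*eI⁻¹^3 + et*e1*eI^4*e0⁻¹*eI⁻¹^3 + et*e1*eI^4*e0⁻¹*e1⁻¹^2*eI⁻¹^3 + et*e1^2*eI^2*e0⁻¹*e1⁻¹*eI⁻¹^3 + et*e1^2*eI^4*e0⁻¹*e1⁻¹*eI⁻¹^3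 + et*e1^3*eI^2*e0⁻¹*e1⁻¹^2*eI⁻¹^3 + et*e1^3*eI^4*e0⁻¹*e1⁻¹^2*eI⁻¹^3 - et^2 + et^2*e0⁻¹^2 + et^2*eI^3*eI⁻¹^3 - et^2*eI^3*e1⁻¹^2*eI⁻¹^3 - et^2*eI^3*e0⁻¹^2*eI⁻¹^3 + et^2*e1*e0⁻¹^2*e1⁻¹ + et^2*e1*eI^3*e1⁻¹*eI⁻¹^3 - et^2*e1*eI^3*e0⁻¹^2*e1⁻¹*eI⁻¹^3 + et^2*e1^2*eI^3*e1⁻¹^2*eI⁻¹^3 - et^2*e1^2*eI^3*e0⁻¹^2*e1⁻¹^2*eI⁻¹^3 + e0*eI^2*et⁻¹*e1⁻¹*eI⁻¹^3 + e0*eI^4*et⁻¹*e1⁻¹*eI⁻¹^3 - e0*e1*et⁻¹*eI⁻¹ - e0*e1*eI*et⁻¹ + e0*e1*eI^2*et⁻¹*eI⁻¹^3 + e0*e1*eI^2*et⁻¹*e1⁻¹^2*eI⁻¹^3 + e0*e1*eI^4*et⁻¹*eI⁻¹^3 + e0*e1*eI^4*et⁻¹*e1⁻¹^2*eI⁻¹^3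 + e0*e1^2*eI^2*et⁻¹*e1⁻¹*eI⁻¹^3 + e0*e1^2*eI^4*et⁻¹*e1⁻¹*eI⁻¹^3 + e0*e1^3*eI^2*et⁻¹*e1⁻¹^2*eI⁻¹^3 + e0*e1^3*eI^4*et⁻¹*e1⁻¹^2*eI⁻¹^3 + e0*et*eI^2*e1⁻¹*eI⁻¹^3 + e0*et*eI^4*e1⁻¹*eI⁻¹^3 - e0*et*e1*eI^2*eI⁻¹^3 + e0*et*e1*eI^2*e1⁻¹^2*eI⁻¹^3 - e0*et*e1*eI^4*eI⁻¹^3 + e0*et*e1*eI^4*e1⁻¹^2*eI⁻¹^3 - e0*et*e1^2*eI^2*e1⁻¹*eI⁻¹^3 - e0*et*e1^2*eI^4*e1⁻¹*eI⁻¹^3 - e0*et*e1^3*eI^2*e1⁻¹^2*eI⁻¹^3 - e0*et*e1^3*eI^4*e1⁻¹^2*eI⁻¹^3 - e0^2 + e0^2*et⁻¹^2 + e0^2*eI^3*eI⁻¹^3 - e0^2*eI^3*e1⁻¹^2*eI⁻¹^3 - e0^2*eI^3*et⁻¹^2*eI⁻¹^3 + e0^2*e1*et⁻¹^2*e1⁻¹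 + e0^2*e1*eI^3*e1⁻¹*eI⁻¹^3 - e0^2*e1*eI^3*et⁻¹^2*e1⁻¹*eI⁻¹^3 + e0^2*e1^2*eI^3*e1⁻¹^2*eI⁻¹^3 - e0^2*e1^2*eI^3*et⁻¹^2*e1⁻¹^2*eI⁻¹^3 + 2*s01*s10 - 2*s01*s10*eI^3*eI⁻¹^3 + s01*s10*eI^3*e1⁻¹^2*eI⁻¹^3 + 3*s01*s10*e1*e1⁻¹ - 2*s01*s10*e1*eI^3*e1⁻¹*eI⁻¹^3 - 2*s01*s10*e1^2*eI^3*e1⁻¹^2*eI⁻¹^3 - s01*s10*et^2*eI^3*e1⁻¹^2*eI⁻¹^3 + s01*s10*e0*eI^2*et⁻¹*e1⁻¹*eI⁻¹^3 + s01*s10*e0*eI^4*et⁻¹*e1⁻¹*eI⁻¹^3 + s01*s10*e0*e1*eI^2*et⁻¹*e1⁻¹^2*eI⁻¹^3 + s01*s10*e0*e1*eI^4*et⁻¹*e1⁻¹^2*eI⁻¹^3 + s01*s10*e0*et*eI^2*e1⁻¹*eI⁻¹^3 + s01*s10*e0*et*eI^4*e1⁻¹*eI⁻¹^3 + s01*s10*e0*et*e1*eI^2*e1⁻¹^2*eI⁻¹^3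 + s01*s10*e0*et*e1*eI^4*e1⁻¹^2*eI⁻¹^3 - s01*s10*e0^2 + s01*s10*e0^2*et⁻¹^2 + s01*s10*e0^2*eI^3*eI⁻¹^3 - 2*s01*s10*e0^2*eI^3*e1⁻¹^2*eI⁻¹^3 - s01*s10*e0^2*eI^3*et⁻¹^2*eI⁻¹^3 + s01*s10*e0^2*e1*et⁻¹^2*e1⁻¹ + s01*s10*e0^2*e1*eI^3*e1⁻¹*eI⁻¹^3 - s01*s10*e0^2*e1*eI^3*et⁻¹^2*e1⁻¹*eI⁻¹^3 + s01*s10*e0^2*e1^2*eI^3*e1⁻¹^2*eI⁻¹^3 - s01*s10*e0^2*e1^2*eI^3*et⁻¹^2*e1⁻¹^2*eI⁻¹^3 - s01^2*s10^2*e0^2*eI^3*e1⁻¹^2*eI⁻¹^3 + 2*st1*s1t - st1*s1t*et⁻¹^2 - 2*st1*s1t*eI^3*eI⁻¹^3 + st1*s1t*eI^3*et⁻¹^2*eI⁻¹^3 + 2*st1*s1t*e1*e1⁻¹ - st1*s1t*e1*et⁻¹^2*e1⁻¹ - st1*s1t*e1*e0⁻¹*et⁻¹*eI⁻¹ - st1*s1t*e1*eI*e0⁻¹*et⁻¹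 + st1*s1t*e1*eI^2*e0⁻¹*et⁻¹*eI⁻¹^3 - 2*st1*s1t*e1*eI^3*e1⁻¹*eI⁻¹^3 + st1*s1t*e1*eI^3*et⁻¹^2*e1⁻¹*eI⁻¹^3 + st1*s1t*e1*eI^4*e0⁻¹*et⁻¹*eI⁻¹^3 - st1*s1t*e1^2 + 2*st1*s1t*e1^2*et⁻¹^2 + st1*s1t*e1^2*e0⁻¹^2 + st1*s1t*e1^2*eI^2*e0⁻¹*et⁻¹*e1⁻¹*eI⁻¹^3 + st1*s1t*e1^2*eI^3*eI⁻¹^3 - 2*st1*s1t*e1^2*eI^3*e1⁻¹^2*eI⁻¹^3 - 2*st1*s1t*e1^2*eI^3*et⁻¹^2*eI⁻¹^3 + st1*s1t*e1^2*eI^3*et⁻¹^2*e1⁻¹^2*eI⁻¹^3 - st1*s1t*e1^2*eI^3*e0⁻¹^2*eI⁻¹^3 + st1*s1t*e1^2*eI^4*e0⁻¹*et⁻¹*e1⁻¹*eI⁻¹^3 + 3*st1*s1t*e1^3*et⁻¹^2*e1⁻¹ + st1*s1t*e1^3*e0⁻¹^2*e1⁻¹ + st1*s1t*e1^3*eI^2*e0⁻¹*et⁻¹*e1⁻¹^2*eI⁻¹^3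 + st1*s1t*e1^3*eI^3*e1⁻¹*eI⁻¹^3 - 2*st1*s1t*e1^3*eI^3*et⁻¹^2*e1⁻¹*eI⁻¹^3 - st1*s1t*e1^3*eI^3*e0⁻¹^2*e1⁻¹*eI⁻¹^3 + st1*s1t*e1^3*eI^4*e0⁻¹*et⁻¹*e1⁻¹^2*eI⁻¹^3 + st1*s1t*e1^4*eI^3*e1⁻¹^2*eI⁻¹^3 - 2*st1*s1t*e1^4*eI^3*et⁻¹^2*e1⁻¹^2*eI⁻¹^3 - st1*s1t*e1^4*eI^3*e0⁻¹^2*e1⁻¹^2*eI⁻¹^3 - st1*s1t*e0*e1*et⁻¹*eI⁻¹ - st1*s1t*e0*e1*eI*et⁻¹ + st1*s1t*e0*e1*eI^2*et⁻¹*eI⁻¹^3 + st1*s1t*e0*e1*eI^4*et⁻¹*eI⁻¹^3 + st1*s1t*e0*e1^2*eI^2*et⁻¹*e1⁻¹*eI⁻¹^3 + st1*s1t*e0*e1^2*eI^4*et⁻¹*e1⁻¹*eI⁻¹^3 + st1*s1t*e0*e1^3*eI^2*et⁻¹*e1⁻¹^2*eI⁻¹^3 + st1*s1t*e0*e1^3*eI^4*et⁻¹*e1⁻¹^2*eI⁻¹^3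 + st1*s1t*e0^2*et⁻¹^2 - st1*s1t*e0^2*eI^3*et⁻¹^2*eI⁻¹^3 + st1*s1t*e0^2*e1*et⁻¹^2*e1⁻¹ - st1*s1t*e0^2*e1*eI^3*et⁻¹^2*e1⁻¹*eI⁻¹^3 - st1*s1t*e0^2*e1^2*eI^3*et⁻¹^2*e1⁻¹^2*eI⁻¹^3 + st1*s1t*s01*s10 - st1*s1t*s01*s10*eI^3*eI⁻¹^3 + st1*s1t*s01*s10*e1*e1⁻¹ - st1*s1t*s01*s10*e1*eI^3*e1⁻¹*eI⁻¹^3 - st1*s1t*s01*s10*e1^2*eI^3*e1⁻¹^2*eI⁻¹^3 + st1*s1t*s01*s10*e0^2*et⁻¹^2 - st1*s1t*s01*s10*e0^2*eI^3*et⁻¹^2*eI⁻¹^3 + st1*s1t*s01*s10*e0^2*e1*et⁻¹^2*e1⁻¹ - st1*s1t*s01*s10*e0^2*e1*eI^3*et⁻¹^2*e1⁻¹*eI⁻¹^3 - st1*s1t*s01*s10*e0^2*e1^2*eI^3*et⁻¹^2*e1⁻¹^2*eI⁻¹^3 + st1^2*s1t^2*e1^2*et⁻¹^2 - st1^2*s1t^2*e1^2*eI^3*et⁻¹^2*eI⁻¹^3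 + st1^2*s1t^2*e1^3*et⁻¹^2*e1⁻¹ - st1^2*s1t^2*e1^3*eI^3*et⁻¹^2*e1⁻¹*eI⁻¹^3 - st1^2*s1t^2*e1^4*eI^3*et⁻¹^2*e1⁻¹^2*eI⁻¹^3 + s0t*st0 - 2*s0t*st0*eI^3*eI⁻¹^3 + s0t*st0*eI^3*et⁻¹^2*eI⁻¹^3 + s0t*st0*e1*e1⁻¹ - 2*s0t*st0*e1*eI^3*e1⁻¹*eI⁻¹^3 + s0t*st0*e1*eI^3*et⁻¹^2*e1⁻¹*eI⁻¹^3 + s0t*st0*e1^2*et⁻¹^2 - 2*s0t*st0*e1^2*eI^3*e1⁻¹^2*eI⁻¹^3 - s0t*st0*e1^2*eI^3*et⁻¹^2*eI⁻¹^3 + s0t*st0*e1^2*eI^3*et⁻¹^2*e1⁻¹^2*eI⁻¹^3 + s0t*st0*e1^3*et⁻¹^2*e1⁻¹ - s0t*st0*e1^3*eI^3*et⁻¹^2*e1⁻¹*eI⁻¹^3 - s0t*st0*e1^4*eI^3*et⁻¹^2*e1⁻¹^2*eI⁻¹^3 + s0t*st0*e0*eI^2*et⁻¹*e1⁻¹*eI⁻¹^3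 + s0t*st0*e0*eI^4*et⁻¹*e1⁻¹*eI⁻¹^3 + s0t*st0*e0*e1*eI^2*et⁻¹*eI⁻¹^3 + s0t*st0*e0*e1*eI^2*et⁻¹*e1⁻¹^2*eI⁻¹^3 + s0t*st0*e0*e1*eI^4*et⁻¹*eI⁻¹^3 + s0t*st0*e0*e1*eI^4*et⁻¹*e1⁻¹^2*eI⁻¹^3 + s0t*st0*e0*e1^2*eI^2*et⁻¹*e1⁻¹*eI⁻¹^3 + s0t*st0*e0*e1^2*eI^4*et⁻¹*e1⁻¹*eI⁻¹^3 + s0t*st0*e0*e1^3*eI^2*et⁻¹*e1⁻¹^2*eI⁻¹^3 + s0t*st0*e0*e1^3*eI^4*et⁻¹*e1⁻¹^2*eI⁻¹^3 + s0t*st0*e0^2*et⁻¹^2 + s0t*st0*e0^2*eI^3*eI⁻¹^3 - s0t*st0*e0^2*eI^3*e1⁻¹^2*eI⁻¹^3 - 2*s0t*st0*e0^2*eI^3*et⁻¹^2*eI⁻¹^3 + s0t*st0*e0^2*e1*et⁻¹^2*e1⁻¹ + s0t*st0*e0^2*e1*eI^3*e1⁻¹*eI⁻¹^3 - 2*s0t*st0*e0^2*e1*eI^3*et⁻¹^2*e1⁻¹*eI⁻¹^3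 + s0t*st0*e0^2*e1^2*eI^3*e1⁻¹^2*eI⁻¹^3 - 2*s0t*st0*e0^2*e1^2*eI^3*et⁻¹^2*e1⁻¹^2*eI⁻¹^3 + s0t*st0*s01*s10*e0^2*et⁻¹^2 - s0t*st0*s01*s10*e0^2*eI^3*e1⁻¹^2*eI⁻¹^3 - s0t*st0*s01*s10*e0^2*eI^3*et⁻¹^2*eI⁻¹^3 + s0t*st0*s01*s10*e0^2*e1*et⁻¹^2*e1⁻¹ - s0t*st0*s01*s10*e0^2*e1*eI^3*et⁻¹^2*e1⁻¹*eI⁻¹^3 - s0t*st0*s01*s10*e0^2*e1^2*eI^3*et⁻¹^2*e1⁻¹^2*eI⁻¹^3 + s0t*st0*st1*s1t*e1^2*et⁻¹^2 - s0t*st0*st1*s1t*e1^2*eI^3*et⁻¹^2*eI⁻¹^3 + s0t*st0*st1*s1t*e1^3*et⁻¹^2*e1⁻¹ - s0t*st0*st1*s1t*e1^3*eI^3*et⁻¹^2*e1⁻¹*eI⁻¹^3 - s0t*st0*st1*s1t*e1^4*eI^3*et⁻¹^2*e1⁻¹^2*eI⁻¹^3 + s0t*st0*st1*s1t*e0^2*et⁻¹^2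 - s0t*st0*st1*s1t*e0^2*eI^3*et⁻¹^2*eI⁻¹^3 + s0t*st0*st1*s1t*e0^2*e1*et⁻¹^2*e1⁻¹ - s0t*st0*st1*s1t*e0^2*e1*eI^3*et⁻¹^2*e1⁻¹*eI⁻¹^3 - s0t*st0*st1*s1t*e0^2*e1^2*eI^3*et⁻¹^2*e1⁻¹^2*eI⁻¹^3 + s0t*st0*st1*s1t*s01*s10*e0^2*et⁻¹^2 - s0t*st0*st1*s1t*s01*s10*e0^2*eI^3*et⁻¹^2*eI⁻¹^3 + s0t*st0*st1*s1t*s01*s10*e0^2*e1*et⁻¹^2*e1⁻¹ - s0t*st0*st1*s1t*s01*s10*e0^2*e1*eI^3*et⁻¹^2*e1⁻¹*eI⁻¹^3 - s0t*st0*st1*s1t*s01*s10*e0^2*e1^2*eI^3*et⁻¹^2*e1⁻¹^2*eI⁻¹^3 - s0t^2*st0^2*e0^2*eI^3*et⁻¹^2*eI⁻¹^3 - s0t^2*st0^2*e0^2*e1*eI^3*et⁻¹^2*e1⁻¹*eI⁻¹^3 - s0t^2*st0^2*e0^2*e1^2*eI^3*et⁻¹^2*e1⁻¹^2*eI⁻¹^3)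 * hi1 + (-4 - eI⁻¹^2 + e1⁻¹^2 + et⁻¹^2 - e0⁻¹*et⁻¹*e1⁻¹*eI⁻¹ + e0⁻¹^2 - 6*eI*eI⁻¹ + eI*e1⁻¹^2*eI⁻¹ + eI*et⁻¹^2*eI⁻¹ - eI*e0⁻¹*et⁻¹*e1⁻¹ - eI*e0⁻¹*et⁻¹*e1⁻¹*eI⁻¹^2 + eI*e0⁻¹^2*eI⁻¹ - eI^2 - 6*eI^2*eI⁻¹^2 + eI^2*e1⁻¹^2*eI⁻¹^2 + eI^2*et⁻¹^2*eI⁻¹^2 - eI^2*e0⁻¹*et⁻¹*e1⁻¹*eI⁻¹ + eI^2*e0⁻¹^2*eI⁻¹^2 - eI^3*eI⁻¹ - eI^3*e0⁻¹*et⁻¹*e1⁻¹*eI⁻¹^2 - eI^4*eI⁻¹^2 + e1*e0⁻¹*et⁻¹*eI⁻¹ + e1*eI*e0⁻¹*et⁻¹ + e1*eI*e0⁻¹*et⁻¹*eI⁻¹^2 + e1*eI^2*e0⁻¹*et⁻¹*eI⁻¹ + e1*eI^3*e0⁻¹*et⁻¹*eI⁻¹^2 + e1^2 - e1^2*et⁻¹^2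 - e1^2*e0⁻¹^2 + e1^2*eI*eI⁻¹ - e1^2*eI*et⁻¹^2*eI⁻¹ - e1^2*eI*e0⁻¹^2*eI⁻¹ + e1^2*eI^2*eI⁻¹^2 - e1^2*eI^2*et⁻¹^2*eI⁻¹^2 - e1^2*eI^2*e0⁻¹^2*eI⁻¹^2 + et*e0⁻¹*e1⁻¹*eI⁻¹ + et*eI*e0⁻¹*e1⁻¹ + et*eI*e0⁻¹*e1⁻¹*eI⁻¹^2 + et*eI^2*e0⁻¹*e1⁻¹*eI⁻¹ + et*eI^3*e0⁻¹*e1⁻¹*eI⁻¹^2 + et*e1*e0⁻¹*eI⁻¹ + et*e1*eI*e0⁻¹ + et*e1*eI*e0⁻¹*eI⁻¹^2 + et*e1*eI^2*e0⁻¹*eI⁻¹ + et*e1*eI^3*e0⁻¹*eI⁻¹^2 + et^2 - et^2*e1⁻¹^2 - et^2*e0⁻¹^2 + et^2*eI*eI⁻¹ - et^2*eI*e1⁻¹^2*eI⁻¹ - et^2*eI*e0⁻¹^2*eI⁻¹ + et^2*eI^2*eI⁻¹^2 - et^2*eI^2*e1⁻¹^2*eI⁻¹^2 - et^2*eI^2*e0⁻¹^2*eI⁻¹^2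 + e0*et⁻¹*e1⁻¹*eI⁻¹ + e0*eI*et⁻¹*e1⁻¹ + e0*eI*et⁻¹*e1⁻¹*eI⁻¹^2 + e0*eI^2*et⁻¹*e1⁻¹*eI⁻¹ + e0*eI^3*et⁻¹*e1⁻¹*eI⁻¹^2 + e0*e1*et⁻¹*eI⁻¹ + e0*e1*eI*et⁻¹ + e0*e1*eI*et⁻¹*eI⁻¹^2 + e0*e1*eI^2*et⁻¹*eI⁻¹ + e0*e1*eI^3*et⁻¹*eI⁻¹^2 + e0*et*e1⁻¹*eI⁻¹ + e0*et*eI*e1⁻¹ + e0*et*eI*e1⁻¹*eI⁻¹^2 + e0*et*eI^2*e1⁻¹*eI⁻¹ + e0*et*eI^3*e1⁻¹*eI⁻¹^2 - e0*et*e1*eI⁻¹ - e0*et*e1*eI - e0*et*e1*eI*eI⁻¹^2 - e0*et*e1*eI^2*eI⁻¹ - e0*et*e1*eI^3*eI⁻¹^2 + e0^2 - e0^2*e1⁻¹^2 - e0^2*et⁻¹^2 + e0^2*eI*eI⁻¹ - e0^2*eI*e1⁻¹^2*eI⁻¹ - e0^2*eI*et⁻¹^2*eI⁻¹ + e0^2*eI^2*eI⁻¹^2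 - e0^2*eI^2*e1⁻¹^2*eI⁻¹^2 - e0^2*eI^2*et⁻¹^2*eI⁻¹^2 - 2*s01*s10 + s01*s10*e1⁻¹^2 - 2*s01*s10*eI*eI⁻¹ + s01*s10*eI*e1⁻¹^2*eI⁻¹ - 2*s01*s10*eI^2*eI⁻¹^2 + s01*s10*eI^2*e1⁻¹^2*eI⁻¹^2 - s01*s10*et^2*e1⁻¹^2 - s01*s10*et^2*eI*e1⁻¹^2*eI⁻¹ - s01*s10*et^2*eI^2*e1⁻¹^2*eI⁻¹^2 + s01*s10*e0*et⁻¹*e1⁻¹*eI⁻¹ + s01*s10*e0*eI*et⁻¹*e1⁻¹ + s01*s10*e0*eI*et⁻¹*e1⁻¹*eI⁻¹^2 + s01*s10*e0*eI^2*et⁻¹*e1⁻¹*eI⁻¹ + s01*s10*e0*eI^3*et⁻¹*e1⁻¹*eI⁻¹^2 + s01*s10*e0*et*e1⁻¹*eI⁻¹ + s01*s10*e0*et*eI*e1⁻¹ + s01*s10*e0*et*eI*e1⁻¹*eI⁻¹^2 + s01*s10*e0*et*eI^2*e1⁻¹*eI⁻¹ + s01*s10*e0*et*eI^3*e1⁻¹*eI⁻¹^2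 + s01*s10*e0^2 - 2*s01*s10*e0^2*e1⁻¹^2 - s01*s10*e0^2*et⁻¹^2 + s01*s10*e0^2*eI*eI⁻¹ - 2*s01*s10*e0^2*eI*e1⁻¹^2*eI⁻¹ - s01*s10*e0^2*eI*et⁻¹^2*eI⁻¹ + s01*s10*e0^2*eI^2*eI⁻¹^2 - 2*s01*s10*e0^2*eI^2*e1⁻¹^2*eI⁻¹^2 - s01*s10*e0^2*eI^2*et⁻¹^2*eI⁻¹^2 - s01^2*s10^2*e0^2*e1⁻¹^2 - s01^2*s10^2*e0^2*eI*e1⁻¹^2*eI⁻¹ - s01^2*s10^2*e0^2*eI^2*e1⁻¹^2*eI⁻¹^2 - 2*st1*s1t + st1*s1t*et⁻¹^2 - 2*st1*s1t*eI*eI⁻¹ + st1*s1t*eI*et⁻¹^2*eI⁻¹ - 2*st1*s1t*eI^2*eI⁻¹^2 + st1*s1t*eI^2*et⁻¹^2*eI⁻¹^2 + st1*s1t*e1*e0⁻¹*et⁻¹*eI⁻¹ + st1*s1t*e1*eI*e0⁻¹*et⁻¹ + st1*s1t*e1*eI*e0⁻¹*et⁻¹*eI⁻¹^2 + st1*s1t*e1*eI^2*e0⁻¹*et⁻¹*eI⁻¹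 + st1*s1t*e1*eI^3*e0⁻¹*et⁻¹*eI⁻¹^2 + st1*s1t*e1^2 - 2*st1*s1t*e1^2*et⁻¹^2 - st1*s1t*e1^2*e0⁻¹^2 + st1*s1t*e1^2*eI*eI⁻¹ - 2*st1*s1t*e1^2*eI*et⁻¹^2*eI⁻¹ - st1*s1t*e1^2*eI*e0⁻¹^2*eI⁻¹ + st1*s1t*e1^2*eI^2*eI⁻¹^2 - 2*st1*s1t*e1^2*eI^2*et⁻¹^2*eI⁻¹^2 - st1*s1t*e1^2*eI^2*e0⁻¹^2*eI⁻¹^2 + st1*s1t*e0*e1*et⁻¹*eI⁻¹ + st1*s1t*e0*e1*eI*et⁻¹ + st1*s1t*e0*e1*eI*et⁻¹*eI⁻¹^2 + st1*s1t*e0*e1*eI^2*et⁻¹*eI⁻¹ + st1*s1t*e0*e1*eI^3*et⁻¹*eI⁻¹^2 - st1*s1t*e0^2*et⁻¹^2 - st1*s1t*e0^2*eI*et⁻¹^2*eI⁻¹ - st1*s1t*e0^2*eI^2*et⁻¹^2*eI⁻¹^2 - st1*s1t*s01*s10 - st1*s1t*s01*s10*eI*eI⁻¹ - st1*s1t*s01*s10*eI^2*eI⁻¹^2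 - st1*s1t*s01*s10*e0^2*et⁻¹^2 - st1*s1t*s01*s10*e0^2*eI*et⁻¹^2*eI⁻¹ - st1*s1t*s01*s10*e0^2*eI^2*et⁻¹^2*eI⁻¹^2 - st1^2*s1t^2*e1^2*et⁻¹^2 - st1^2*s1t^2*e1^2*eI*et⁻¹^2*eI⁻¹ - st1^2*s1t^2*e1^2*eI^2*et⁻¹^2*eI⁻¹^2 - 2*s0t*st0 + s0t*st0*et⁻¹^2 - 2*s0t*st0*eI*eI⁻¹ + s0t*st0*eI*et⁻¹^2*eI⁻¹ - 2*s0t*st0*eI^2*eI⁻¹^2 + s0t*st0*eI^2*et⁻¹^2*eI⁻¹^2 - s0t*st0*e1^2*et⁻¹^2 - s0t*st0*e1^2*eI*et⁻¹^2*eI⁻¹ - s0t*st0*e1^2*eI^2*et⁻¹^2*eI⁻¹^2 + s0t*st0*e0*et⁻¹*e1⁻¹*eI⁻¹ + s0t*st0*e0*eI*et⁻¹*e1⁻¹ + s0t*st0*e0*eI*et⁻¹*e1⁻¹*eI⁻¹^2 + s0t*st0*e0*eI^2*et⁻¹*e1⁻¹*eI⁻¹ + s0t*st0*e0*eI^3*et⁻¹*e1⁻¹*eI⁻¹^2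 + s0t*st0*e0*e1*et⁻¹*eI⁻¹ + s0t*st0*e0*e1*eI*et⁻¹ + s0t*st0*e0*e1*eI*et⁻¹*eI⁻¹^2 + s0t*st0*e0*e1*eI^2*et⁻¹*eI⁻¹ + s0t*st0*e0*e1*eI^3*et⁻¹*eI⁻¹^2 + s0t*st0*e0^2 - s0t*st0*e0^2*e1⁻¹^2 - 2*s0t*st0*e0^2*et⁻¹^2 + s0t*st0*e0^2*eI*eI⁻¹ - s0t*st0*e0^2*eI*e1⁻¹^2*eI⁻¹ - 2*s0t*st0*e0^2*eI*et⁻¹^2*eI⁻¹ + s0t*st0*e0^2*eI^2*eI⁻¹^2 - s0t*st0*e0^2*eI^2*e1⁻¹^2*eI⁻¹^2 - 2*s0t*st0*e0^2*eI^2*et⁻¹^2*eI⁻¹^2 - s0t*st0*s01*s10*e0^2*e1⁻¹^2 - s0t*st0*s01*s10*e0^2*et⁻¹^2 - s0t*st0*s01*s10*e0^2*eI*e1⁻¹^2*eI⁻¹ - s0t*st0*s01*s10*e0^2*eI*et⁻¹^2*eI⁻¹ - s0t*st0*s01*s10*e0^2*eI^2*e1⁻¹^2*eI⁻¹^2 -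 s0t*st0*s01*s10*e0^2*eI^2*et⁻¹^2*eI⁻¹^2 - s0t*st0*st1*s1t*e1^2*et⁻¹^2 - s0t*st0*st1*s1t*e1^2*eI*et⁻¹^2*eI⁻¹ - s0t*st0*st1*s1t*e1^2*eI^2*et⁻¹^2*eI⁻¹^2 - s0t*st0*st1*s1t*e0^2*et⁻¹^2 - s0t*st0*st1*s1t*e0^2*eI*et⁻¹^2*eI⁻¹ - s0t*st0*st1*s1t*e0^2*eI^2*et⁻¹^2*eI⁻¹^2 - s0t*st0*st1*s1t*s01*s10*e0^2*et⁻¹^2 - s0t*st0*st1*s1t*s01*s10*e0^2*eI*et⁻¹^2*eI⁻¹ - s0t*st0*st1*s1t*s01*s10*e0^2*eI^2*et⁻¹^2*eI⁻¹^2 - s0t^2*st0^2*e0^2*et⁻¹^2 - s0t^2*st0^2*e0^2*eI*et⁻¹^2*eI⁻¹ - s0t^2*st0^2*e0^2*eI^2*et⁻¹^2*eI⁻¹^2) * hiI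
end
end
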